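/- arXiv:2212.02172 — 4 statements merged into one kernel-verified Lean document; each statement's English description precedes it below -/
import Mathlib

section
/- Let T be a compact linear operator on L²((0,1); ℂ), let (c_n) be complex numbers and (p_n) complex numbers with Re p_n > -1/2, and suppose T(xⁿ) = c_n · x^{p_n} (as elements of L²((0,1); ℂ)) for every natural number n. Then |c_n| · √((2n+1)/(2 Re p_n + 1)) → 0 as n → ∞. In particular, if p_n = a n + b with real a, b ≥ 0 (an affine-index monomial operator), then c_n → 0. -/
open MeasureTheory Set Filter Topology

open scoped InnerProductSpace

set_option maxHeartbeats 1000000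


noncomputable section Stmt4Aux

local notation "μ01" => volume.restrict (Ioo (0:ℝ) 1)
local notation "E01" => Lp ℂ 2 (volume.restrict (Ioo (0:ℝ) 1))

private instance : IsFiniteMeasure (volume.restrict (Ioo (0:ℝ) 1)) :=
  ⟨by rw [Measure.restrict_apply_univ]; exact measure_Ioo_lt_top⟩

private theorem stmt4_normsq_eq (f : E01) :
    ‖f‖^2 = ∫ a, ‖(f : ℝ → ℂ) a‖^2 ∂μ01 := by
  have h1 : (RCLike.re ⟪f, f⟫_ℂ) = ‖f‖^2 := @inner_self_eq_norm_sq ℂ _ _ _ _ f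
  rw [← h1, L2.inner_def]
  have : ∀ a : ℝ, ⟪(f : ℝ → ℂ) a, (f : ℝ → ℂ) a⟫_ℂ
      = (RCLike.ofReal (‖(f : ℝ → ℂ) a‖^2) : ℂ) := by
    intro a; rw [inner_self_eq_norm_sq_to_K]; norm_cast
  simp_rw [this]
  rw [integral_ofReal (𝕜 := ℂ)]
  simp

private theorem stmt4_rint {r : ℝ} (hr : -1 < r) :
    ∫ x in Ioo (0:ℝ) 1, x ^ r = 1/(r+1) := by
  rw [← integral_Ioc_eq_integral_Ioo, ← intervalIntegral.integral_of_le zero_le_one,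
    integral_rpow (Or.inl hr), Real.one_rpow, Real.zero_rpow (by linarith)]
  ring

private theorem stmt4_normsq_cpow {q : ℂ} (hq : -1/2 < q.re) (f : E01)
    (hf : (f : ℝ → ℂ) =ᵐ[μ01] fun x : ℝ => (x : ℂ) ^ q) :
    ‖f‖^2 = 1/(2*q.re+1) := by
  rw [stmt4_normsq_eq]
  have hae : (fun a => ‖(f : ℝ → ℂ) a‖^2) =ᵐ[μ01] fun x : ℝ => x ^ (2*q.re) := by
    filter_upwards [hf, ae_restrict_mem measurableSet_Ioo] with x hx hmem
    have hx0 : (0:ℝ) < x := hmem.1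
    rw [hx, Complex.norm_cpow_eq_rpow_re_of_pos hx0, sq,
      ← Real.rpow_add hx0]
    ring_nf
  rw [integral_congr_ae hae, stmt4_rint (by linarith)]

private theorem stmt4_norm_cpow {q : ℂ} (hq : -1/2 < q.re) (f : E01)
    (hf : (f : ℝ → ℂ) =ᵐ[μ01] fun x : ℝ => (x : ℂ) ^ q) :
    ‖f‖ = Real.sqrt (1/(2*q.re+1)) := by
  rw [← stmt4_normsq_cpow hq f hf, Real.sqrt_sq (norm_nonneg f)]


private theorem stmt4_weak_null (mono : ℕ → E01)
    (hmono : ∀ n : ℕ, (mono n : ℝ → ℂ) =ᵐ[μ01] fun x : ℝ => (x : ℂ) ^ (n : ℕ))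
    (hmnorm : ∀ n : ℕ, ‖((Real.sqrt (2*(n:ℝ)+1) : ℝ) : ℂ) • mono n‖ = 1)
    (y : E01) :
    Tendsto (fun n : ℕ => ⟪y, ((Real.sqrt (2*(n:ℝ)+1) : ℝ) : ℂ) • mono n⟫_ℂ)
      atTop (𝓝 0) := by
  refine NormedAddCommGroup.tendsto_nhds_zero.mpr (fun ε hε => ?_)
  -- Step 1: tail integrals tend to zero
  have hint : Integrable (fun x => ‖(y : ℝ → ℂ) x‖^2) μ01 :=
    (memLp_two_iff_integrable_sq_norm (Lp.aestronglyMeasurable y)).mp (Lp.memLp y)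
  have hJ : Tendsto
      (fun k : ℕ => ∫ a, ‖((Ioo (0:ℝ) (1 - 1/(k+1)))ᶜ.indicator (y : ℝ → ℂ)) a‖^2 ∂μ01)
      atTop (𝓝 0) := by
    have h := tendsto_integral_of_dominated_convergence
      (F := fun k : ℕ => fun a => ‖((Ioo (0:ℝ) (1 - 1/(k+1)))ᶜ.indicator (y : ℝ → ℂ)) a‖^2)
      (f := fun _ => (0:ℝ)) (bound := fun x => ‖(y : ℝ → ℂ) x‖^2)
      (fun k => by
        have hm : AEStronglyMeasurable ((Ioo (0:ℝ) (1 - 1/(k+1)))ᶜ.indicator (y : ℝ → ℂ)) μ01 :=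
          (Lp.aestronglyMeasurable y).indicator measurableSet_Ioo.compl
        exact hm.norm.pow 2)
      hint
      (fun k => by
        filter_upwards with a
        rw [Real.norm_eq_abs, abs_of_nonneg (by positivity)]
        exact pow_le_pow_left₀ (norm_nonneg _) (norm_indicator_le_norm_self _ _) 2)
      (by
        filter_upwards [ae_restrict_mem measurableSet_Ioo] with a ha
        obtain ⟨K, hK⟩ := exists_nat_one_div_lt (show (0:ℝ) < 1 - a by linarith [ha.2])
        apply tendsto_const_nhds.congr'
        filter_upwards [eventually_ge_atTop K] with k hk
        have h1 : (1:ℝ)/(k+1) ≤ 1/(K+1) := by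
          apply div_le_div_of_nonneg_left one_pos.le (by positivity)
          have : (K:ℝ) ≤ k := Nat.cast_le.mpr hk
          linarith
        have hmem : a ∈ Ioo (0:ℝ) (1 - 1/(k+1)) := ⟨ha.1, by linarith⟩
        rw [indicator_of_notMem (by simp only [mem_compl_iff, not_not]; exact hmem),
          norm_zero]
        norm_num)
    simpa using h
  obtain ⟨k, hk⟩ := (hJ.eventually_lt_const (by positivity : (0:ℝ) < (ε/2)^2)).exists
  set t : ℝ := 1 - 1/((k:ℝ)+1) with hts
  have ht0 : 0 ≤ t := by
    have : (1:ℝ)/((k:ℝ)+1) ≤ 1 := by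
      rw [div_le_one (by positivity)]; linarith [Nat.cast_nonneg (α := ℝ) k]
    simp only [hts]; linarith
  have ht1 : t < 1 := by
    have : (0:ℝ) < 1/((k:ℝ)+1) := by positivity
    simp only [hts]; linarith
  set s : Set ℝ := Ioo (0:ℝ) t with hs
  -- split y
  have y1m : MemLp (s.indicator (y : ℝ → ℂ)) 2 μ01 :=
    (Lp.memLp y).indicator measurableSet_Ioo
  have y2m : MemLp (sᶜ.indicator (y : ℝ → ℂ)) 2 μ01 :=
    (Lp.memLp y).indicator measurableSet_Ioo.compl
  set y1 : E01 := y1m.toLp _ with hy1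
  set y2 : E01 := y2m.toLp _ with hy2
  have hysplit : y = y1 + y2 := by
    apply Lp.ext
    filter_upwards [y1m.coeFn_toLp, y2m.coeFn_toLp, Lp.coeFn_add y1 y2] with a h1 h2 h3
    rw [h3, Pi.add_apply, h1, h2, ← Pi.add_apply (s.indicator (y : ℝ → ℂ)),
      Set.indicator_self_add_compl s (y : ℝ → ℂ)]
  -- y2 is small
  have hy2small : ‖y2‖ < ε/2 := by
    have hsq : ‖y2‖^2 < (ε/2)^2 := by
      have : ‖y2‖^2 = ∫ a, ‖(sᶜ.indicator (y : ℝ → ℂ)) a‖^2 ∂μ01 := by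
        rw [stmt4_normsq_eq y2]
        exact integral_congr_ae (by filter_upwards [y2m.coeFn_toLp] with a ha; rw [ha])
      rw [this]; exact hk
    exact lt_of_pow_lt_pow_left₀ 2 (by positivity) hsq
  -- bound for the y1 part
  set C : ℝ := ∫ a, ‖(y : ℝ → ℂ) a‖ ∂μ01 with hC
  have hC0 : 0 ≤ C := integral_nonneg (fun a => norm_nonneg _)
  have hyint : Integrable (y : ℝ → ℂ) μ01 := MemLp.integrable one_le_two (Lp.memLp y)
  have hb1 : ∀ n : ℕ, ‖⟪y1, ((Real.sqrt (2*(n:ℝ)+1) : ℝ) : ℂ) • mono n⟫_ℂ‖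
      ≤ Real.sqrt (2*(n:ℝ)+1) * t^n * C := by
    intro n
    rw [L2.inner_def]
    have hcongr : (fun a => ⟪(y1 : ℝ → ℂ) a,
          ((((Real.sqrt (2*(n:ℝ)+1) : ℝ) : ℂ) • mono n : E01) : ℝ → ℂ) a⟫_ℂ)
        =ᵐ[μ01] fun a => (starRingEnd ℂ) (s.indicator (y : ℝ → ℂ) a) *
          (((Real.sqrt (2*(n:ℝ)+1) : ℝ) : ℂ) * ((a : ℂ)) ^ n) := by
      filter_upwards [y1m.coeFn_toLp,
        Lp.coeFn_smul (((Real.sqrt (2*(n:ℝ)+1) : ℝ) : ℂ)) (mono n), hmono n] with a h1 h2 h3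
      rw [RCLike.inner_apply, h1, h2, Pi.smul_apply, h3, smul_eq_mul, mul_comm]
    rw [integral_congr_ae hcongr]
    have hbd : ∀ᵐ a ∂μ01, ‖(starRingEnd ℂ) (s.indicator (y : ℝ → ℂ) a) *
        (((Real.sqrt (2*(n:ℝ)+1) : ℝ) : ℂ) * ((a : ℂ)) ^ n)‖
        ≤ Real.sqrt (2*(n:ℝ)+1) * t^n * ‖(y : ℝ → ℂ) a‖ := by
      filter_upwards [ae_restrict_mem measurableSet_Ioo] with a ha
      by_cases hmem : a ∈ s
      · rw [indicator_of_mem hmem, norm_mul, RCLike.norm_conj, norm_mul, norm_pow,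
          Complex.norm_real, Real.norm_eq_abs, abs_of_nonneg (Real.sqrt_nonneg _),
          Complex.norm_real, Real.norm_eq_abs, abs_of_nonneg ha.1.le]
        have hpow : a^n ≤ t^n := pow_le_pow_left₀ ha.1.le hmem.2.le n
        have h2 : (0:ℝ) ≤ Real.sqrt (2*(n:ℝ)+1) := Real.sqrt_nonneg _
        have h3 : (0:ℝ) ≤ ‖(y : ℝ → ℂ) a‖ := norm_nonneg _
        have h4 : (0:ℝ) ≤ a^n := pow_nonneg ha.1.le n
        nlinarith [mul_le_mul_of_nonneg_left hpow (mul_nonneg h2 h3)]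
      · rw [indicator_of_notMem hmem, map_zero, zero_mul, norm_zero]
        positivity
    calc ‖∫ a, (starRingEnd ℂ) (s.indicator (y : ℝ → ℂ) a) *
          (((Real.sqrt (2*(n:ℝ)+1) : ℝ) : ℂ) * ((a : ℂ)) ^ n) ∂μ01‖
        ≤ ∫ a, Real.sqrt (2*(n:ℝ)+1) * t^n * ‖(y : ℝ → ℂ) a‖ ∂μ01 :=
          norm_integral_le_of_norm_le ((hyint.norm.const_mul _)) hbd
      _ = Real.sqrt (2*(n:ℝ)+1) * t^n * C := by rw [integral_const_mul]
  -- the scalar sequence tends to zero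
  have htend : Tendsto (fun n : ℕ => Real.sqrt (2*(n:ℝ)+1) * t^n * C) atTop (𝓝 0) := by
    have A := tendsto_pow_const_mul_const_pow_of_lt_one 1 ht0 ht1
    have B := tendsto_pow_atTop_nhds_zero_of_lt_one ht0 ht1
    have hcomb : Tendsto (fun n : ℕ => (2*((n:ℝ)^1 * t^n) + t^n) * C) atTop (𝓝 0) := by
      have := ((A.const_mul 2).add B).mul_const C
      simpa using this
    apply squeeze_zero (fun n => by positivity) _ hcomb
    intro n
    have hsq : Real.sqrt (2*(n:ℝ)+1) ≤ 2*(n:ℝ)+1 := by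
      have h := Real.sqrt_le_sqrt (show 2*(n:ℝ)+1 ≤ (2*(n:ℝ)+1)^2 by nlinarith [Nat.cast_nonneg (α := ℝ) n])
      rwa [Real.sqrt_sq (by positivity)] at h
    have htn : (0:ℝ) ≤ t^n := pow_nonneg ht0 n
    calc Real.sqrt (2*(n:ℝ)+1) * t^n * C ≤ (2*(n:ℝ)+1) * t^n * C :=
        mul_le_mul_of_nonneg_right (mul_le_mul_of_nonneg_right hsq htn) hC0
      _ = (2*((n:ℝ)^1 * t^n) + t^n) * C := by ring
  have hev : ∀ᶠ n : ℕ in atTop, Real.sqrt (2*(n:ℝ)+1) * t^n * C < ε/2 :=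
    htend.eventually_lt_const (half_pos hε)
  filter_upwards [hev] with n hn
  have hsplit2 : ⟪y, ((Real.sqrt (2*(n:ℝ)+1) : ℝ) : ℂ) • mono n⟫_ℂ
      = ⟪y1, ((Real.sqrt (2*(n:ℝ)+1) : ℝ) : ℂ) • mono n⟫_ℂ
      + ⟪y2, ((Real.sqrt (2*(n:ℝ)+1) : ℝ) : ℂ) • mono n⟫_ℂ := by
    rw [hysplit, inner_add_left]
  rw [hsplit2]
  have hb2 : ‖⟪y2, ((Real.sqrt (2*(n:ℝ)+1) : ℝ) : ℂ) • mono n⟫_ℂ‖ ≤ ‖y2‖ := by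
    have := norm_inner_le_norm (𝕜 := ℂ) y2 (((Real.sqrt (2*(n:ℝ)+1) : ℝ) : ℂ) • mono n)
    rwa [hmnorm n, mul_one] at this
  calc ‖⟪y1, ((Real.sqrt (2*(n:ℝ)+1) : ℝ) : ℂ) • mono n⟫_ℂ
        + ⟪y2, ((Real.sqrt (2*(n:ℝ)+1) : ℝ) : ℂ) • mono n⟫_ℂ‖
      ≤ ‖⟪y1, ((Real.sqrt (2*(n:ℝ)+1) : ℝ) : ℂ) • mono n⟫_ℂ‖
        + ‖⟪y2, ((Real.sqrt (2*(n:ℝ)+1) : ℝ) : ℂ) • mono n⟫_ℂ‖ := norm_add_le _ _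
    _ < ε/2 + ε/2 := add_lt_add_of_le_of_lt ((hb1 n).trans hn.le) (hb2.trans_lt hy2small)
    _ = ε := add_halves ε

private theorem stmt4_func_null (mono : ℕ → E01)
    (hmono : ∀ n : ℕ, (mono n : ℝ → ℂ) =ᵐ[μ01] fun x : ℝ => (x : ℂ) ^ (n : ℕ))
    (hmnorm : ∀ n : ℕ, ‖((Real.sqrt (2*(n:ℝ)+1) : ℝ) : ℂ) • mono n‖ = 1)
    (φ : E01 →L[ℂ] ℂ) :
    Tendsto (fun n : ℕ => φ (((Real.sqrt (2*(n:ℝ)+1) : ℝ) : ℂ) • mono n))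
      atTop (𝓝 0) := by
  set y : E01 := (InnerProductSpace.toDual ℂ _).symm φ with hy
  have hφ : ∀ x : E01, φ x = ⟪y, x⟫_ℂ := by
    intro x
    have h1 := (InnerProductSpace.toDual ℂ
      (Lp ℂ 2 (volume.restrict (Ioo (0:ℝ) 1)))).apply_symm_apply φ
    rw [← h1, hy, InnerProductSpace.toDual_apply_apply]
  apply (stmt4_weak_null mono hmono hmnorm y).congr
  intro n
  rw [hφ]

/-- If `T` is a compact linear operator on `L²((0,1); ℂ)` mapping the monomial
`xⁿ` to `c_n · x^{p_n}` (with `Re p_n > -1/2`) for every `n`, then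
`|c_n| √((2n+1)/(2 Re p_n + 1)) → 0`. In particular, for an affine-index monomial operator,
i.e. when `p_n = a n + b` with real `a, b ≥ 0`, we have `c_n → 0`. -/
theorem stmt4
    (T : Lp ℂ 2 (volume.restrict (Ioo (0:ℝ) 1)) →L[ℂ] Lp ℂ 2 (volume.restrict (Ioo (0:ℝ) 1)))
    (hTc : IsCompactOperator T)
    (c : ℕ → ℂ) (p : ℕ → ℂ) (hp : ∀ n, -1/2 < (p n).re)
    (mono : ℕ → Lp ℂ 2 (volume.restrict (Ioo (0:ℝ) 1)))
    (hmono : ∀ n : ℕ, (mono n : ℝ → ℂ) =ᵐ[volume.restrict (Ioo (0:ℝ) 1)]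
      fun x : ℝ => (x : ℂ) ^ (n : ℕ))
    (monop : ℕ → Lp ℂ 2 (volume.restrict (Ioo (0:ℝ) 1)))
    (hmonop : ∀ n : ℕ, (monop n : ℝ → ℂ) =ᵐ[volume.restrict (Ioo (0:ℝ) 1)]
      fun x : ℝ => (x : ℂ) ^ (p n))
    (hT : ∀ n : ℕ, T (mono n) = c n • monop n) :
    Tendsto (fun n : ℕ =>
      ‖c n‖ * Real.sqrt ((2 * n + 1) / (2 * (p n).re + 1))) atTop (𝓝 0) ∧
    (∀ a b : ℝ, 0 ≤ a → 0 ≤ b → (∀ n : ℕ, p n = (a * n + b : ℝ)) →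
      Tendsto c atTop (𝓝 0)) := by
  -- norms of the monomials
  have hmn : ∀ n : ℕ, ‖mono n‖ = Real.sqrt (1/(2*(n:ℝ)+1)) := by
    intro n
    have hf' : (mono n : ℝ → ℂ) =ᵐ[μ01] fun x : ℝ => (x : ℂ) ^ ((n : ℂ)) := by
      filter_upwards [hmono n] with x hx
      rw [hx, Complex.cpow_natCast]
    have hq : -1/2 < ((n:ℂ)).re := by
      simp only [Complex.natCast_re]
      have : (0:ℝ) ≤ n := Nat.cast_nonneg n
      linarith
    have := stmt4_norm_cpow hq (mono n) hf'
    simpa using this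
  have hmnorm : ∀ n : ℕ, ‖((Real.sqrt (2*(n:ℝ)+1) : ℝ) : ℂ) • mono n‖ = 1 := by
    intro n
    rw [norm_smul, hmn n, Complex.norm_real, Real.norm_eq_abs,
      abs_of_nonneg (Real.sqrt_nonneg _), ← Real.sqrt_mul (by positivity),
      mul_one_div, div_self (by positivity), Real.sqrt_one]
  have hpn : ∀ n : ℕ, ‖monop n‖ = Real.sqrt (1/(2*(p n).re+1)) := fun n =>
    stmt4_norm_cpow (hp n) (monop n) (hmonop n)
  -- the compact-operator argument
  obtain ⟨K, hKc, hKn⟩ := hTc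
  obtain ⟨r, hr0, hball⟩ := Metric.mem_nhds_iff.mp hKn
  set e : ℕ → E01 := fun n => ((Real.sqrt (2*(n:ℝ)+1) : ℝ) : ℂ) • mono n with he
  set u : ℕ → E01 := fun n => ((r/2 : ℝ) : ℂ) • e n with hu
  have hunorm : ∀ n, ‖u n‖ = r/2 := by
    intro n
    rw [hu, norm_smul, hmnorm n, mul_one, Complex.norm_real, Real.norm_eq_abs,
      abs_of_pos (half_pos hr0)]
  have humem : ∀ n, T (u n) ∈ K := by
    intro n
    apply hball
    simp only [Metric.mem_ball, dist_zero_right]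
    rw [hunorm n]
    exact half_lt_self hr0
  have hTu0 : Tendsto (fun n => T (u n)) atTop (𝓝 0) := by
    apply tendsto_of_subseq_tendsto
    intro ns hns
    obtain ⟨a, haK, ψ, hψmono, hψtend⟩ := hKc.isSeqCompact (fun j => humem (ns j))
    refine ⟨ψ, ?_⟩
    have ha : a = 0 := by
      have hzero : ∀ z : E01, ⟪z, a⟫_ℂ = 0 := by
        intro z
        have h1 : Tendsto (fun j => ⟪z, T (u (ns (ψ j)))⟫_ℂ) atTop (𝓝 ⟪z, a⟫_ℂ) :=
          tendsto_const_nhds.inner hψtend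
        have h2 : Tendsto (fun n => ⟪z, T (u n)⟫_ℂ) atTop (𝓝 0) := by
          have h3 := stmt4_func_null mono hmono hmnorm ((innerSL ℂ z).comp T)
          have h4 : (fun n => ⟪z, T (u n)⟫_ℂ)
              = fun n : ℕ => ((r/2 : ℝ) : ℂ) *
                (((innerSL ℂ z).comp T) (((Real.sqrt (2*(n:ℝ)+1) : ℝ) : ℂ) • mono n)) := by
            funext n
            simp only [hu, he, _root_.map_smul, ContinuousLinearMap.coe_comp',
              Function.comp_apply, innerSL_apply_apply, smul_eq_mul, inner_smul_right]
          rw [h4]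
          have h6 := h3.const_mul (((r/2 : ℝ) : ℂ))
          rw [mul_zero] at h6
          exact h6
        exact tendsto_nhds_unique h1 (h2.comp (hns.comp hψmono.tendsto_atTop))
      have := hzero a
      rwa [inner_self_eq_zero] at this
    rw [ha] at hψtend
    exact hψtend
  have hnorm0 : Tendsto (fun n => ‖T (u n)‖) atTop (𝓝 0) := by
    simpa using hTu0.norm
  have hTnorm : ∀ n, ‖T (u n)‖
      = (r/2) * (‖c n‖ * Real.sqrt ((2*(n:ℝ)+1)/(2*(p n).re+1))) := by
    intro n
    have h1 : T (u n) = ((r/2 : ℝ) : ℂ) • (((Real.sqrt (2*(n:ℝ)+1) : ℝ) : ℂ)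
        • (c n • monop n)) := by
      rw [hu, he, _root_.map_smul, _root_.map_smul, hT n]
    rw [h1, norm_smul, norm_smul, norm_smul, hpn n]
    rw [Complex.norm_real, Real.norm_eq_abs, abs_of_pos (half_pos hr0),
      Complex.norm_real, Real.norm_eq_abs, abs_of_nonneg (Real.sqrt_nonneg _)]
    have hsqrt : Real.sqrt (2*(n:ℝ)+1) * Real.sqrt (1/(2*(p n).re+1))
        = Real.sqrt ((2*(n:ℝ)+1)/(2*(p n).re+1)) := by
      rw [← Real.sqrt_mul (by positivity), mul_one_div]
    calc r/2 * (Real.sqrt (2*(n:ℝ)+1) * (‖c n‖ * Real.sqrt (1/(2*(p n).re+1))))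
        = r/2 * (‖c n‖
          * (Real.sqrt (2*(n:ℝ)+1) * Real.sqrt (1/(2*(p n).re+1)))) := by ring
      _ = r/2 * (‖c n‖ * Real.sqrt ((2*(n:ℝ)+1)/(2*(p n).re+1))) := by
          rw [hsqrt]
  have part1 : Tendsto (fun n : ℕ =>
      ‖c n‖ * Real.sqrt ((2 * (n:ℝ) + 1) / (2 * (p n).re + 1))) atTop (𝓝 0) := by
    have h5 : Tendsto (fun n => (2/r) * ‖T (u n)‖) atTop (𝓝 0) := by
      simpa using hnorm0.const_mul (2/r)
    apply h5.congr
    intro n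
    rw [hTnorm n, ← mul_assoc, show (2/r) * (r/2) = 1 from by field_simp, one_mul]
  refine ⟨part1, ?_⟩
  intro a b ha hb hab
  rw [tendsto_zero_iff_norm_tendsto_zero]
  have hD : (0:ℝ) < 2*a+2*b+1 := by linarith
  apply squeeze_zero (fun n => norm_nonneg _)
    (g := fun n => Real.sqrt (2*a+2*b+1) *
      (‖c n‖ * Real.sqrt ((2 * (n:ℝ) + 1) / (2 * (p n).re + 1))))
  · intro n
    have hre : (p n).re = a*(n:ℝ)+b := by rw [hab n, Complex.ofReal_re]
    have hd1 : (0:ℝ) < 2*(a*(n:ℝ)+b)+1 := by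
      have : (0:ℝ) ≤ (n:ℝ) := Nat.cast_nonneg n
      nlinarith
    have hratio : 1/(2*a+2*b+1) ≤ (2*(n:ℝ)+1)/(2*(a*(n:ℝ)+b)+1) := by
      rw [div_le_div_iff₀ hD hd1]
      have : (0:ℝ) ≤ (n:ℝ) := Nat.cast_nonneg n
      nlinarith
    have hs1 : Real.sqrt (1/(2*a+2*b+1)) ≤ Real.sqrt ((2*(n:ℝ)+1)/(2*(a*(n:ℝ)+b)+1)) :=
      Real.sqrt_le_sqrt hratio
    have hsD : (0:ℝ) < Real.sqrt (2*a+2*b+1) := Real.sqrt_pos.mpr hD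
    have hinv : Real.sqrt (1/(2*a+2*b+1)) = 1/Real.sqrt (2*a+2*b+1) := by
      rw [one_div, one_div, Real.sqrt_inv]
    have habs : ‖c n‖ = ‖c n‖ := rfl
    rw [habs, hre]
    have step : ‖c n‖ * (1/Real.sqrt (2*a+2*b+1))
        ≤ ‖c n‖ * Real.sqrt ((2*(n:ℝ)+1)/(2*(a*(n:ℝ)+b)+1)) := by
      apply mul_le_mul_of_nonneg_left _ (norm_nonneg _)
      rw [← hinv]; exact hs1
    have := mul_le_mul_of_nonneg_left step hsD.le
    calc ‖c n‖
        = Real.sqrt (2*a+2*b+1) * (‖c n‖ * (1/Real.sqrt (2*a+2*b+1))) := by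
          field_simp
      _ ≤ Real.sqrt (2*a+2*b+1) *
          (‖c n‖ * Real.sqrt ((2*(n:ℝ)+1)/(2*(a*(n:ℝ)+b)+1))) := this
  · simpa using part1.const_mul (Real.sqrt (2*a+2*b+1))

end Stmt4Aux
end

section
/- Let S ⊆ ℕ be a set of natural numbers with ∑_{n∈S} 1/(n+1) = ∞. Then the linear span of the monomials {x ↦ xⁿ : n ∈ S} is dense in L²((0,1); ℂ). Consequently, if T and T′ are bounded linear operators on L²((0,1); ℂ) with T(xⁿ) = T′(xⁿ) for all n ∈ S, then T = T′. -/
open MeasureTheory Set Finset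
open scoped InnerProductSpace ENNReal

noncomputable abbrev μ01 : Measure ℝ := volume.restrict (Ioo (0:ℝ) 1)

lemma integ_mono (n : ℕ) : ∫ x in Ioo (0:ℝ) 1, (x:ℂ)^n = ((n+1 : ℝ))⁻¹ := by
  have h : ∀ x : ℝ, (x:ℂ)^n = ((x^n : ℝ) : ℂ) := by intro x; push_cast; ring
  simp_rw [h]
  have h2 : ∫ x in Ioo (0:ℝ) 1, x^n = (n+1 : ℝ)⁻¹ := by
    rw [← integral_Ioc_eq_integral_Ioo, ← intervalIntegral.integral_of_le (by norm_num),
      integral_pow]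
    norm_num
  calc ∫ x in Ioo (0:ℝ) 1, ((x^n : ℝ) : ℂ) = ↑(∫ x in Ioo (0:ℝ) 1, x^n) := integral_ofReal
    _ = _ := by rw [h2]
lemma inner_mono (mono : ℕ → Lp ℂ 2 μ01)
    (hmono : ∀ n : ℕ, (mono n : ℝ → ℂ) =ᵐ[μ01] fun x : ℝ => (x : ℂ) ^ n) (a b : ℕ) :
    ⟪mono a, mono b⟫_ℂ = ((a+b+1 : ℝ) : ℂ)⁻¹ := by
  rw [MeasureTheory.L2.inner_def]
  simp_rw [RCLike.inner_apply]
  have : ∫ x, (mono b : ℝ → ℂ) x * (starRingEnd ℂ) ((mono a : ℝ → ℂ) x) ∂μ01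
      = ∫ x, (x:ℂ)^(a+b) ∂μ01 := by
    apply integral_congr_ae
    filter_upwards [hmono a, hmono b] with x hx hy
    rw [hx, hy]
    simp [← Complex.ofReal_pow, ← Complex.ofReal_mul, ← pow_add]
    ring
  rw [this, integ_mono (a+b)]
  push_cast
  norm_num

lemma key_frac {a k n s : ℝ} (hkn : k ≠ n) (hk : s+k+1 ≠ 0) (hn : s+n+1 ≠ 0) :
    (a * ((k+n+1)/(k-n)))/(s+k+1) + ((2*n+1)*(a/(n-k)))/(s+n+1)
      = (a / (s+k+1)) * ((s-n)/(s+n+1)) := by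
  have h1 : k - n ≠ 0 := sub_ne_zero.mpr hkn
  have h2 : n - k ≠ 0 := sub_ne_zero.mpr (Ne.symm hkn)
  field_simp
  ring
lemma pf_lemma (m : ℕ) (L : List ℕ) (hnd : L.Nodup) (hm : m ∉ L) :
    ∃ a : ℕ → ℝ,
      a m = ∏ n ∈ L.toFinset, (((m:ℝ)+n+1)/((m:ℝ)-n)) ∧
      ∀ s : ℝ, (∀ k ∈ insert m L.toFinset, s + (k:ℝ) + 1 ≠ 0) →
        ∑ k ∈ insert m L.toFinset, a k / (s+k+1)
          = (1/(s+m+1)) * ∏ n ∈ L.toFinset, ((s-(n:ℝ))/(s+n+1)) := by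
  induction L with
  | nil =>
    refine ⟨fun _ => 1, by simp, fun s hs => by simp [one_div]⟩
  | cons n L' ih =>
    have hnd' : L'.Nodup := hnd.of_cons
    have hm' : m ∉ L' := fun h => hm (List.mem_cons_of_mem _ h)
    have hnL' : n ∉ L' := (List.nodup_cons.mp hnd).1
    have hmn : m ≠ n := fun h => hm (by rw [h]; exact List.mem_cons_self)
    obtain ⟨a, ham, hid⟩ := ih hnd' hm'
    have hnF : n ∉ insert m L'.toFinset := by
      simp [List.mem_toFinset, hnL', Ne.symm hmn]
    have hnL'F : n ∉ L'.toFinset := by simp [hnL']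
    refine ⟨fun e => if e = n then
        (2*(n:ℝ)+1) * ∑ k ∈ insert m L'.toFinset, a k / ((n:ℝ) - k)
      else a e * (((e:ℝ)+n+1)/((e:ℝ)-n)), ?_, ?_⟩
    · simp only [if_neg hmn, List.toFinset_cons, prod_insert hnL'F, ham]
      ring
    · intro s hs
      have hF : (n :: L').toFinset = insert n L'.toFinset := by simp
      have hcomm : insert m (n :: L').toFinset = insert n (insert m L'.toFinset) := by
        rw [hF, Finset.insert_comm]
      rw [hcomm] at hs ⊢
      have hsn : s + (n:ℝ) + 1 ≠ 0 := hs n (mem_insert_self _ _)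
      have hs' : ∀ k ∈ insert m L'.toFinset, s + (k:ℝ) + 1 ≠ 0 :=
        fun k hk => hs k (mem_insert_of_mem hk)
      rw [sum_insert hnF]
      beta_reduce
      rw [if_pos rfl]
      have step : ∀ k ∈ insert m L'.toFinset,
          (if k = n then (2*(n:ℝ)+1) * ∑ j ∈ insert m L'.toFinset, a j / ((n:ℝ) - j)
            else a k * (((k:ℝ)+n+1)/((k:ℝ)-n))) / (s+k+1)
            + ((2*(n:ℝ)+1)*(a k/((n:ℝ)-k)))/(s+n+1)
          = (a k / (s+k+1)) * ((s-(n:ℝ))/(s+n+1)) := by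
        intro k hk
        have hkn : k ≠ n := fun h => hnF (h ▸ hk)
        have hknR : (k:ℝ) ≠ (n:ℝ) := by exact_mod_cast hkn
        rw [if_neg hkn]
        exact key_frac hknR (hs' k hk) hsn
      calc (2*(n:ℝ)+1) * (∑ j ∈ insert m L'.toFinset, a j / ((n:ℝ) - j)) / (s+n+1)
            + ∑ k ∈ insert m L'.toFinset,
              (if k = n then (2*(n:ℝ)+1) * ∑ j ∈ insert m L'.toFinset, a j / ((n:ℝ) - j)
                else a k * (((k:ℝ)+n+1)/((k:ℝ)-n))) / (s+k+1)
          = ∑ k ∈ insert m L'.toFinset,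
              ((if k = n then (2*(n:ℝ)+1) * ∑ j ∈ insert m L'.toFinset, a j / ((n:ℝ) - j)
                else a k * (((k:ℝ)+n+1)/((k:ℝ)-n))) / (s+k+1)
               + ((2*(n:ℝ)+1)*(a k/((n:ℝ)-k)))/(s+n+1)) := by
            rw [sum_add_distrib]
            rw [← sum_div, ← mul_sum, mul_div_assoc]
            ring
        _ = ∑ k ∈ insert m L'.toFinset, (a k / (s+k+1)) * ((s-(n:ℝ))/(s+n+1)) :=
            sum_congr rfl step
        _ = (∑ k ∈ insert m L'.toFinset, a k / (s+k+1)) * ((s-(n:ℝ))/(s+n+1)) := by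
            rw [← sum_mul]
        _ = ((1/(s+m+1)) * ∏ j ∈ L'.toFinset, ((s-(j:ℝ))/(s+j+1))) * ((s-(n:ℝ))/(s+n+1)) := by
            rw [hid s hs']
        _ = (1/(s+m+1)) * ∏ j ∈ (n :: L').toFinset, ((s-(j:ℝ))/(s+j+1)) := by
            rw [hF, prod_insert hnL'F]
            ring

lemma approx_mono (mono : ℕ → Lp ℂ 2 μ01)
    (hmono : ∀ n : ℕ, (mono n : ℝ → ℂ) =ᵐ[μ01] fun x : ℝ => (x : ℂ) ^ n)
    (m : ℕ) (L : List ℕ) (hnd : L.Nodup) (hm : m ∉ L) :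
    ∃ p ∈ Submodule.span ℂ (mono '' {n | n ∈ L}),
      ‖mono m - p‖^2 = (1/(2*(m:ℝ)+1)) * ∏ n ∈ L.toFinset, (((m:ℝ)-n)/((m:ℝ)+n+1))^2 := by
  obtain ⟨a, ham, hid⟩ := pf_lemma m L hnd hm
  have hmF : m ∉ L.toFinset := by simpa using hm
  -- nonvanishing of a m
  have hamne : a m ≠ 0 := by
    rw [ham]
    apply prod_ne_zero_iff.mpr
    intro n hn
    have hmn : (m:ℝ) ≠ (n:ℝ) := by
      have : m ≠ n := fun h => hmF (h ▸ hn)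
      exact_mod_cast this
    apply div_ne_zero (by positivity) (sub_ne_zero.mpr hmn)
  set c : ℝ := a m with hc
  set r : Lp ℂ 2 μ01 := ∑ k ∈ insert m L.toFinset, ((a k : ℝ) : ℂ) • mono k with hr
  -- hs hypothesis at natural points
  have hsnat : ∀ t : ℕ, ∀ k ∈ insert m L.toFinset, (t:ℝ) + (k:ℝ) + 1 ≠ 0 := by
    intro t k _; positivity
  -- G values
  have hG : ∀ t : ℕ, ∑ k ∈ insert m L.toFinset, a k / ((t:ℝ)+k+1)
      = (1/((t:ℝ)+m+1)) * ∏ n ∈ L.toFinset, (((t:ℝ)-n)/((t:ℝ)+n+1)) :=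
    fun t => hid t (hsnat t)
  have hGzero : ∀ t ∈ L.toFinset, ∑ k ∈ insert m L.toFinset, a k / ((t:ℝ)+k+1) = 0 := by
    intro t ht
    rw [hG t]
    rw [Finset.prod_eq_zero ht (by simp)]
    ring
  -- inner products of r with mono t
  have hinner : ∀ t : ℕ, ⟪mono t, r⟫_ℂ = ((∑ k ∈ insert m L.toFinset, a k / ((t:ℝ)+k+1) : ℝ) : ℂ) := by
    intro t
    rw [hr, inner_sum]
    push_cast
    apply Finset.sum_congr rfl
    intro k _
    rw [inner_smul_right, inner_mono mono hmono t k]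
    rw [div_eq_mul_inv]
    push_cast
    ring
  -- ⟪r, r⟫
  have hrr : ⟪r, r⟫_ℂ = ((c * ((1/(2*(m:ℝ)+1)) * ∏ n ∈ L.toFinset, (((m:ℝ)-n)/((m:ℝ)+n+1))) : ℝ) : ℂ) := by
    rw [hr, sum_inner]
    have : ∀ k ∈ insert m L.toFinset,
        ⟪((a k : ℝ) : ℂ) • mono k, r⟫_ℂ = ((a k : ℝ) : ℂ) * ⟪mono k, r⟫_ℂ := by
      intro k _
      rw [inner_smul_left, Complex.conj_ofReal]
    rw [Finset.sum_congr rfl this]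
    simp_rw [hinner]
    rw [sum_insert hmF]
    have hz : ∑ k ∈ L.toFinset, ((a k : ℝ) : ℂ)
        * ((∑ j ∈ insert m L.toFinset, a j / ((k:ℝ)+j+1) : ℝ) : ℂ) = 0 := by
      apply Finset.sum_eq_zero
      intro k hk
      rw [hGzero k hk]
      simp
    rw [hz, add_zero, hG m]
    have : (m:ℝ) + m + 1 = 2*(m:ℝ)+1 := by ring
    rw [this]
    push_cast
    ring
  -- norm of r
  have hnr : ‖r‖^2 = c * ((1/(2*(m:ℝ)+1)) * ∏ n ∈ L.toFinset, (((m:ℝ)-n)/((m:ℝ)+n+1))) := by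
    have h1 : (⟪r, r⟫_ℂ) = ((‖r‖^2 : ℝ) : ℂ) := by
      rw [inner_self_eq_norm_sq_to_K]
      norm_cast
    rw [h1] at hrr
    exact_mod_cast hrr
  refine ⟨mono m - ((c : ℝ) : ℂ)⁻¹ • r, ?_, ?_⟩
  · have hrsplit : r = ((c : ℝ) : ℂ) • mono m + ∑ k ∈ L.toFinset, ((a k : ℝ) : ℂ) • mono k := by
      rw [hr, sum_insert hmF]
    rw [hrsplit, smul_add, smul_smul, inv_mul_cancel₀ (by exact_mod_cast hamne), one_smul]
    have : mono m - (mono m + ((c:ℝ):ℂ)⁻¹ • ∑ k ∈ L.toFinset, ((a k : ℝ) : ℂ) • mono k)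
        = - (((c:ℝ):ℂ)⁻¹ • ∑ k ∈ L.toFinset, ((a k : ℝ) : ℂ) • mono k) := by abel
    rw [this]
    apply Submodule.neg_mem
    apply Submodule.smul_mem
    apply Submodule.sum_mem
    intro k hk
    apply Submodule.smul_mem
    apply Submodule.subset_span
    exact ⟨k, by simpa using hk, rfl⟩
  · have hd : mono m - (mono m - ((c : ℝ) : ℂ)⁻¹ • r) = ((c : ℝ) : ℂ)⁻¹ • r := by abel
    set P := ∏ n ∈ L.toFinset, (((m:ℝ)-n)/((m:ℝ)+n+1)) with hP
    have hPne : P ≠ 0 := by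
      apply prod_ne_zero_iff.mpr
      intro n hn
      have hmn : (m:ℝ) ≠ (n:ℝ) := by
        have : m ≠ n := fun h => hmF (h ▸ hn)
        exact_mod_cast this
      exact div_ne_zero (sub_ne_zero.mpr hmn) (by positivity)
    have hcP : c = P⁻¹ := by
      rw [ham, hP, ← Finset.prod_inv_distrib]
      exact Finset.prod_congr rfl fun n _ => (inv_div _ _).symm
    have hprod : ∏ n ∈ L.toFinset, (((m:ℝ)-n)/((m:ℝ)+n+1))^2 = P^2 := by
      rw [hP, Finset.prod_pow]
    rw [hd, norm_smul, mul_pow, hnr, hprod, hcP]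
    have hnorm : ‖((P⁻¹ : ℝ) : ℂ)⁻¹‖^2 = ((P⁻¹)^2)⁻¹ := by
      rw [norm_inv, Complex.norm_real, Real.norm_eq_abs, inv_pow, sq_abs]
    rw [hnorm]
    field_simp

lemma exists_big_sum (S : Set ℕ) (hS : ¬ Summable (fun n : S => (1 : ℝ) / ((n : ℕ) + 1)))
    (C : ℝ) : ∃ T : Finset ℕ, ↑T ⊆ S ∧ C < ∑ n ∈ T, (1:ℝ)/((n:ℝ)+1) := by
  by_contra h
  push_neg at h
  apply hS
  apply summable_of_sum_le (c := C)
  · intro i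
    positivity
  · intro u
    have := h (u.map (Function.Embedding.subtype _))
    rw [Finset.sum_map] at this
    apply this
    intro n hn
    simp only [Finset.coe_map, Set.mem_image] at hn
    obtain ⟨i, _, rfl⟩ := hn
    exact i.2
lemma factor_bound (m n : ℕ) :
    (((m:ℝ)-n)/((m:ℝ)+n+1))^2 ≤ Real.exp (-(2*((m:ℝ)+1)⁻¹ * ((n:ℝ)+1)⁻¹)) := by
  have h1 : |((m:ℝ)-n)/((m:ℝ)+n+1)| ≤ 1 - (((m:ℝ)+1)*((n:ℝ)+1))⁻¹ := by
    have habs : |(m:ℝ)-(n:ℝ)| ≤ (m:ℝ)+(n:ℝ) := by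
      rw [abs_sub_le_iff]
      constructor <;> [skip; skip] <;>
        · have : (0:ℝ) ≤ (m:ℝ) := Nat.cast_nonneg m
          have : (0:ℝ) ≤ (n:ℝ) := Nat.cast_nonneg n
          linarith
    have hpos : (0:ℝ) < (m:ℝ)+n+1 := by positivity
    rw [abs_div, abs_of_pos hpos, div_le_iff₀ hpos]
    have hle : (m:ℝ)+n+1 ≤ ((m:ℝ)+1)*((n:ℝ)+1) := by nlinarith [Nat.cast_nonneg (α := ℝ) m, Nat.cast_nonneg (α := ℝ) n]
    have hinv : (((m:ℝ)+1)*((n:ℝ)+1))⁻¹ ≤ ((m:ℝ)+n+1)⁻¹ := by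
      apply inv_anti₀ hpos hle
    have h2 : (1 - (((m:ℝ)+1)*((n:ℝ)+1))⁻¹) * ((m:ℝ)+n+1)
        ≥ (1 - ((m:ℝ)+n+1)⁻¹) * ((m:ℝ)+n+1) := by nlinarith
    have h3 : (1 - ((m:ℝ)+n+1)⁻¹) * ((m:ℝ)+n+1) = (m:ℝ)+n := by
      field_simp
      ring
    linarith
  have h0 : (0:ℝ) ≤ 1 - (((m:ℝ)+1)*((n:ℝ)+1))⁻¹ := by
    have : (((m:ℝ)+1)*((n:ℝ)+1))⁻¹ ≤ 1 := by
      rw [inv_le_one_iff₀]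
      right
      nlinarith [Nat.cast_nonneg (α := ℝ) m, Nat.cast_nonneg (α := ℝ) n]
    linarith
  have hsq : (((m:ℝ)-n)/((m:ℝ)+n+1))^2 ≤ (1 - (((m:ℝ)+1)*((n:ℝ)+1))⁻¹)^2 := by
    rw [← sq_abs]
    exact pow_le_pow_left₀ (abs_nonneg _) h1 2
  have hexp : 1 - (((m:ℝ)+1)*((n:ℝ)+1))⁻¹ ≤ Real.exp (-(((m:ℝ)+1)*((n:ℝ)+1))⁻¹) := by
    linarith [Real.add_one_le_exp (-(((m:ℝ)+1)*((n:ℝ)+1))⁻¹)]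
  calc (((m:ℝ)-n)/((m:ℝ)+n+1))^2 ≤ (1 - (((m:ℝ)+1)*((n:ℝ)+1))⁻¹)^2 := hsq
    _ ≤ (Real.exp (-(((m:ℝ)+1)*((n:ℝ)+1))⁻¹))^2 := pow_le_pow_left₀ h0 hexp 2
    _ = Real.exp (-(2*((m:ℝ)+1)⁻¹ * ((n:ℝ)+1)⁻¹)) := by
        rw [← Real.exp_nat_mul]
        congr 1
        rw [mul_inv]
        ring
lemma exists_small_prod (S : Set ℕ)
    (hS : ¬ Summable (fun n : S => (1 : ℝ) / ((n : ℕ) + 1))) (m : ℕ) {ε : ℝ} (hε : 0 < ε) :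
    ∃ T : Finset ℕ, ↑T ⊆ S ∧ m ∉ T ∧
      (1/(2*(m:ℝ)+1)) * ∏ n ∈ T, (((m:ℝ)-n)/((m:ℝ)+n+1))^2 < ε := by
  set D : ℝ := 1 + ((m:ℝ)+1) * |Real.log ε| + ((m:ℝ)+1) with hD
  obtain ⟨T₀, hT₀S, hT₀⟩ := exists_big_sum S hS D
  refine ⟨T₀.erase m, fun n hn => hT₀S (Finset.erase_subset _ _ hn), Finset.notMem_erase _ _, ?_⟩
  set T := T₀.erase m with hT
  have hsumT : ((m:ℝ)+1) * |Real.log ε| + ((m:ℝ)+1) ≤ ∑ n ∈ T, (1:ℝ)/((n:ℝ)+1) := by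
    have hsub : ∑ n ∈ T, (1:ℝ)/((n:ℝ)+1) ≥ (∑ n ∈ T₀, (1:ℝ)/((n:ℝ)+1)) - 1 := by
      by_cases hm : m ∈ T₀
      · rw [hT, ← Finset.add_sum_erase _ _ hm] at *
        have : (1:ℝ)/((m:ℝ)+1) ≤ 1 := by
          rw [div_le_one (by positivity)]
          linarith [Nat.cast_nonneg (α := ℝ) m]
        linarith
      · rw [hT, Finset.erase_eq_of_notMem hm]
        linarith
    linarith
  -- product bound
  have hprod : ∏ n ∈ T, (((m:ℝ)-n)/((m:ℝ)+n+1))^2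
      ≤ ∏ n ∈ T, Real.exp (-(2*((m:ℝ)+1)⁻¹ * ((n:ℝ)+1)⁻¹)) := by
    apply Finset.prod_le_prod
    · intro n _; positivity
    · intro n hn
      exact factor_bound m n
  have hexps : ∏ n ∈ T, Real.exp (-(2*((m:ℝ)+1)⁻¹ * ((n:ℝ)+1)⁻¹))
      = Real.exp (-(2*((m:ℝ)+1)⁻¹) * ∑ n ∈ T, (1:ℝ)/((n:ℝ)+1)) := by
    rw [← Real.exp_sum]
    congr 1
    rw [Finset.mul_sum]
    apply Finset.sum_congr rfl
    intro n _
    rw [one_div]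
    ring
  have hkey : Real.exp (-(2*((m:ℝ)+1)⁻¹) * ∑ n ∈ T, (1:ℝ)/((n:ℝ)+1)) < ε := by
    have hm1 : (0:ℝ) < (m:ℝ)+1 := by positivity
    have harg : -(2*((m:ℝ)+1)⁻¹) * ∑ n ∈ T, (1:ℝ)/((n:ℝ)+1)
        ≤ -(2*((m:ℝ)+1)⁻¹) * (((m:ℝ)+1) * |Real.log ε| + ((m:ℝ)+1)) := by
      apply mul_le_mul_of_nonpos_left hsumT
      have : (0:ℝ) < 2*((m:ℝ)+1)⁻¹ := by positivity
      linarith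
    have harg2 : -(2*((m:ℝ)+1)⁻¹) * (((m:ℝ)+1) * |Real.log ε| + ((m:ℝ)+1))
        = -2*|Real.log ε| - 2 := by
      field_simp
      ring
    have hlog : -2*|Real.log ε| - 2 < Real.log ε := by
      have h1 : -|Real.log ε| ≤ Real.log ε := neg_abs_le _
      have h2 : -2*|Real.log ε| ≤ -|Real.log ε| := by
        have := abs_nonneg (Real.log ε)
        linarith
      linarith
    calc Real.exp (-(2*((m:ℝ)+1)⁻¹) * ∑ n ∈ T, (1:ℝ)/((n:ℝ)+1))
        ≤ Real.exp (-2*|Real.log ε| - 2) := by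
          apply Real.exp_le_exp.mpr
          linarith [harg, harg2.ge, harg2.le]
      _ < Real.exp (Real.log ε) := Real.exp_lt_exp.mpr hlog
      _ = ε := Real.exp_log hε
  have hfrac : (1/(2*(m:ℝ)+1)) ≤ 1 := by
    rw [div_le_one (by positivity)]
    linarith [Nat.cast_nonneg (α := ℝ) m]
  have hprodnn : (0:ℝ) ≤ ∏ n ∈ T, (((m:ℝ)-n)/((m:ℝ)+n+1))^2 :=
    Finset.prod_nonneg (fun n _ => sq_nonneg _)
  calc (1/(2*(m:ℝ)+1)) * ∏ n ∈ T, (((m:ℝ)-n)/((m:ℝ)+n+1))^2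
      ≤ ∏ n ∈ T, (((m:ℝ)-n)/((m:ℝ)+n+1))^2 := by
        nlinarith [hprodnn]
    _ < ε := by
        calc ∏ n ∈ T, (((m:ℝ)-n)/((m:ℝ)+n+1))^2
            ≤ Real.exp (-(2*((m:ℝ)+1)⁻¹) * ∑ n ∈ T, (1:ℝ)/((n:ℝ)+1)) := by
              rw [← hexps]; exact hprod
          _ < ε := hkey

instance : IsFiniteMeasure μ01 := by
  constructor
  simp [Real.volume_Ioo]
instance : (μ01).WeaklyRegular := by
  apply MeasureTheory.Measure.WeaklyRegular.restrict_of_measure_ne_top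
  simp [Real.volume_Ioo]
-- polynomial combination element
lemma poly_elt_aefn (mono : ℕ → Lp ℂ 2 μ01)
    (hmono : ∀ n : ℕ, (mono n : ℝ → ℂ) =ᵐ[μ01] fun x : ℝ => (x : ℂ) ^ n)
    (N : ℕ) (c : ℕ → ℂ) :
    ((∑ k ∈ Finset.range N, c k • mono k : Lp ℂ 2 μ01) : ℝ → ℂ)
      =ᵐ[μ01] fun x : ℝ => ∑ k ∈ Finset.range N, c k * (x:ℂ)^k := by
  induction N with
  | zero =>
    simp only [Finset.range_zero, Finset.sum_empty]
    filter_upwards [MeasureTheory.Lp.coeFn_zero ℂ 2 μ01] with x hx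
    simpa using hx
  | succ N ih =>
    simp only [Finset.sum_range_succ]
    filter_upwards [MeasureTheory.Lp.coeFn_add
        (∑ k ∈ Finset.range N, c k • mono k) (c N • mono N), ih,
        MeasureTheory.Lp.coeFn_smul (c N) (mono N), hmono N] with x h1 h2 h3 h4
    rw [h1, Pi.add_apply, h2, h3, Pi.smul_apply, h4]
    simp
lemma span_all_dense (mono : ℕ → Lp ℂ 2 μ01)
    (hmono : ∀ n : ℕ, (mono n : ℝ → ℂ) =ᵐ[μ01] fun x : ℝ => (x : ℂ) ^ n) :
    Dense (↑(Submodule.span ℂ (Set.range mono)) : Set (Lp ℂ 2 μ01)) := by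
  have hbcf : Dense (Lp.boundedContinuousFunction ℂ 2 μ01 : Set (Lp ℂ 2 μ01)) :=
    MeasureTheory.Lp.boundedContinuousFunction_dense ℂ μ01 (by norm_num)
  intro f
  rw [Metric.mem_closure_iff]
  intro ε hε
  -- bounded continuous approximation
  obtain ⟨g, hgmem, hgf⟩ := Metric.mem_closure_iff.mp (hbcf f) (ε/2) (by linarith)
  obtain ⟨G, hG⟩ := MeasureTheory.Lp.mem_boundedContinuousFunction_iff.mp hgmem
  have hgae : (g : ℝ → ℂ) =ᵐ[μ01] G := by
    rw [← hG]
    exact ContinuousMap.coeFn_toAEEqFun μ01 G.toContinuousMap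
  -- Weierstrass on re and im parts
  set δ := ε/8 with hδ
  have hδpos : 0 < δ := by positivity
  obtain ⟨p, hp⟩ := exists_polynomial_near_of_continuousOn 0 1 (fun x => (G x).re)
    (Continuous.continuousOn (by continuity)) δ hδpos
  obtain ⟨q, hq⟩ := exists_polynomial_near_of_continuousOn 0 1 (fun x => (G x).im)
    (Continuous.continuousOn (by continuity)) δ hδpos
  set N := max p.natDegree q.natDegree + 1 with hN
  set c : ℕ → ℂ := fun k => (p.coeff k : ℂ) + (q.coeff k : ℂ) * Complex.I with hcdef
  set P : Lp ℂ 2 μ01 := ∑ k ∈ Finset.range N, c k • mono k with hP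
  have hPmem : P ∈ Submodule.span ℂ (Set.range mono) := by
    apply Submodule.sum_mem
    intro k _
    exact Submodule.smul_mem _ _ (Submodule.subset_span ⟨k, rfl⟩)
  -- pointwise evaluation of the polynomial combination
  have heval : ∀ x : ℝ, ∑ k ∈ Finset.range N, c k * (x:ℂ)^k
      = ((p.eval x : ℝ) : ℂ) + ((q.eval x : ℝ) : ℂ) * Complex.I := by
    intro x
    have hp' : ((p.eval x : ℝ) : ℂ) = ∑ k ∈ Finset.range N, (p.coeff k : ℂ) * (x:ℂ)^k := by
      rw [Polynomial.eval_eq_sum_range' (by omega : p.natDegree < N)]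
      push_cast
      rfl
    have hq' : ((q.eval x : ℝ) : ℂ) = ∑ k ∈ Finset.range N, (q.coeff k : ℂ) * (x:ℂ)^k := by
      rw [Polynomial.eval_eq_sum_range' (by omega : q.natDegree < N)]
      push_cast
      rfl
    rw [hp', hq', Finset.sum_mul, ← Finset.sum_add_distrib]
    apply Finset.sum_congr rfl
    intro k _
    rw [hcdef]
    ring
  -- sup bound on Icc
  have hbound : ∀ x ∈ Icc (0:ℝ) 1,
      ‖G x - ∑ k ∈ Finset.range N, c k * (x:ℂ)^k‖ ≤ 2*δ := by
    intro x hx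
    rw [heval x]
    have hre : (G x - (((p.eval x : ℝ) : ℂ) + ((q.eval x : ℝ) : ℂ) * Complex.I)).re
        = (G x).re - p.eval x := by simp
    have him : (G x - (((p.eval x : ℝ) : ℂ) + ((q.eval x : ℝ) : ℂ) * Complex.I)).im
        = (G x).im - q.eval x := by simp
    calc ‖G x - (((p.eval x : ℝ) : ℂ) + ((q.eval x : ℝ) : ℂ) * Complex.I)‖
        ≤ |(G x - (((p.eval x : ℝ) : ℂ) + ((q.eval x : ℝ) : ℂ) * Complex.I)).re|
          + |(G x - (((p.eval x : ℝ) : ℂ) + ((q.eval x : ℝ) : ℂ) * Complex.I)).im| :=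
          Complex.norm_le_abs_re_add_abs_im _
      _ ≤ 2*δ := by
          rw [hre, him]
          have h1 := hp x hx
          have h2 := hq x hx
          rw [abs_sub_comm ((G x).re) (p.eval x), abs_sub_comm ((G x).im) (q.eval x)]
          linarith
  -- L² bound
  have haeP := poly_elt_aefn mono hmono N c
  have hsub : ((g - P : Lp ℂ 2 μ01) : ℝ → ℂ)
      =ᵐ[μ01] fun x => G x - ∑ k ∈ Finset.range N, c k * (x:ℂ)^k := by
    filter_upwards [MeasureTheory.Lp.coeFn_sub g P, hgae, haeP] with x h1 h2 h3
    rw [h1, Pi.sub_apply, h2, h3]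
  have hnorm : ‖g - P‖ ≤ 2*δ := by
    rw [MeasureTheory.Lp.norm_def, MeasureTheory.eLpNorm_congr_ae hsub]
    have hb : ∀ᵐ x ∂μ01, ‖G x - ∑ k ∈ Finset.range N, c k * (x:ℂ)^k‖ ≤ 2*δ := by
      filter_upwards [ae_restrict_mem measurableSet_Ioo] with x hx
      exact hbound x (Ioo_subset_Icc_self hx)
    have hle := MeasureTheory.eLpNorm_le_of_ae_bound (p := 2) (μ := μ01) hb
    have hμ : μ01 Set.univ = 1 := by
      simp [Measure.restrict_apply_univ, Real.volume_Ioo]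
    rw [hμ, ENNReal.one_rpow, one_mul] at hle
    calc (eLpNorm (fun x => G x - ∑ k ∈ Finset.range N, c k * (x:ℂ)^k) 2 μ01).toReal
        ≤ (ENNReal.ofReal (2*δ)).toReal := ENNReal.toReal_mono ENNReal.ofReal_ne_top hle
      _ = 2*δ := ENNReal.toReal_ofReal (by positivity)
  refine ⟨P, hPmem, ?_⟩
  calc dist f P ≤ dist f g + dist g P := dist_triangle _ _ _
    _ < ε/2 + dist g P := by linarith
    _ ≤ ε/2 + 2*δ := by
        rw [dist_eq_norm]
        linarith [hnorm]
    _ < ε := by rw [hδ]; linarith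

/-- Müntz–Szász in `L²(0,1)`: If `S ⊆ ℕ` satisfies `∑_{n∈S} 1/(n+1) = ∞`
(i.e. the family is not summable), then the linear span of the monomials `{xⁿ : n ∈ S}` is
dense in `L²((0,1); ℂ)`; consequently two bounded operators agreeing on these monomials
are equal. -/
theorem stmt5 (S : Set ℕ) (hS : ¬ Summable (fun n : S => (1 : ℝ) / ((n : ℕ) + 1)))
    (mono : ℕ → Lp ℂ 2 (volume.restrict (Ioo (0:ℝ) 1)))
    (hmono : ∀ n : ℕ, (mono n : ℝ → ℂ) =ᵐ[volume.restrict (Ioo (0:ℝ) 1)]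
      fun x : ℝ => (x : ℂ) ^ (n : ℕ)) :
    Dense (↑(Submodule.span ℂ (mono '' S)) : Set (Lp ℂ 2 (volume.restrict (Ioo (0:ℝ) 1)))) ∧
    ∀ T T' : Lp ℂ 2 (volume.restrict (Ioo (0:ℝ) 1)) →L[ℂ]
        Lp ℂ 2 (volume.restrict (Ioo (0:ℝ) 1)),
      (∀ n ∈ S, T (mono n) = T' (mono n)) → T = T' := by
  set K := Submodule.span ℂ (mono '' S) with hK
  have hclos : ∀ m : ℕ, mono m ∈ closure (K : Set (Lp ℂ 2 μ01)) := by
    intro m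
    rw [Metric.mem_closure_iff]
    intro ε hε
    obtain ⟨T, hTS, hmT, hlt⟩ := exists_small_prod S hS m (show 0 < ε^2 by positivity)
    set L := T.toList with hL
    have hnd : L.Nodup := Finset.nodup_toList T
    have hmL : m ∉ L := by simpa [hL, Finset.mem_toList] using hmT
    obtain ⟨p, hp, hnorm⟩ := approx_mono mono hmono m L hnd hmL
    have hspan : Submodule.span ℂ (mono '' {n | n ∈ L}) ≤ K := by
      apply Submodule.span_mono
      apply Set.image_mono
      intro n hn
      exact hTS (by simpa [hL, Finset.mem_toList] using hn)
    refine ⟨p, hspan hp, ?_⟩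
    rw [dist_eq_norm]
    have hLT : L.toFinset = T := Finset.toList_toFinset T
    rw [hLT] at hnorm
    nlinarith [norm_nonneg (mono m - p), hε, hnorm.le, hnorm.ge]
  have hdense : Dense (K : Set (Lp ℂ 2 μ01)) := by
    have h1 : (↑(Submodule.span ℂ (Set.range mono)) : Set (Lp ℂ 2 μ01))
        ⊆ closure (K : Set (Lp ℂ 2 μ01)) := by
      have hle : Submodule.span ℂ (Set.range mono) ≤ K.topologicalClosure := by
        rw [Submodule.span_le]
        rintro x ⟨m, rfl⟩
        exact hclos m
      intro x hx
      have := hle hx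
      rwa [← Submodule.topologicalClosure_coe]
    rw [dense_iff_closure_eq]
    apply Set.eq_univ_of_univ_subset
    calc (univ : Set (Lp ℂ 2 μ01))
        = closure (↑(Submodule.span ℂ (Set.range mono)) : Set (Lp ℂ 2 μ01)) :=
          ((span_all_dense mono hmono).closure_eq).symm
      _ ⊆ closure (closure (K : Set (Lp ℂ 2 μ01))) := closure_mono h1
      _ = closure (K : Set (Lp ℂ 2 μ01)) := closure_closure
  refine ⟨hdense, fun T T' h => ?_⟩
  apply ContinuousLinearMap.ext_on hdense
  rintro x ⟨n, hn, rfl⟩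
  exact h n hn
end

section
/- There is no bounded linear operator T on L²((0,1); ℂ) such that T(xⁿ) = (n + 1/2) e^{-(n+1/2)} · xⁿ for every natural number n. In particular, a monomial operator can fail to be bounded even though its coefficient sequence c_n = (n+1/2)e^{-(n+1/2)} tends to 0. -/
open MeasureTheory Set Finset

private lemma sumA (N : ℕ) (z : ℂ) :
    ∑ n ∈ Finset.range (N+1), (N.choose n : ℂ) * z ^ n = (1 + z) ^ N := by
  rw [add_comm (1:ℂ) z, add_pow]
  exact Finset.sum_congr rfl fun n _ => by ring

private lemma sumB (M : ℕ) (z : ℂ) :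
    ∑ n ∈ Finset.range (M+2), (n : ℂ) * ((M+1).choose n : ℂ) * z ^ n
      = (M+1) * z * (1 + z) ^ M := by
  rw [Finset.sum_range_succ']
  have hsum : ∑ i ∈ Finset.range (M+1),
      ((i+1 : ℕ) : ℂ) * ((M+1).choose (i+1) : ℂ) * z ^ (i+1)
        = (M+1) * z * ∑ i ∈ Finset.range (M+1), (M.choose i : ℂ) * z ^ i := by
    rw [Finset.mul_sum]
    refine Finset.sum_congr rfl fun i _ => ?_
    have h : ((Nat.succ M * M.choose i : ℕ) : ℂ)
        = (((M+1).choose (i+1) * (i+1) : ℕ) : ℂ) := by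
      rw [Nat.add_one_mul_choose_eq]
    push_cast at h
    push_cast
    linear_combination (-(z ^ (i+1))) * h
  rw [hsum, sumA M z]
  push_cast
  ring

private lemma pow_norm_sq (N : ℕ) (s : ℝ) :
    ‖(1 + (s:ℂ) * Complex.I) ^ N‖ ^ 2 = (1 + s^2) ^ N := by
  rw [norm_pow, ← pow_mul, mul_comm N 2, pow_mul, Complex.sq_norm]
  congr 1
  have := Complex.normSq_add_mul_I 1 s
  simpa using this

private lemma pow_norm_le (N : ℕ) (s : ℝ) (h : (N:ℝ) * s^2 ≤ 1) :
    ‖(1 + (s:ℂ) * Complex.I) ^ N‖ ≤ 2 := by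
  have h1 : ‖(1 + (s:ℂ) * Complex.I) ^ N‖ ^ 2 ≤ 4 := by
    rw [pow_norm_sq]
    calc (1 + s^2) ^ N ≤ (Real.exp (s^2)) ^ N := by
          apply pow_le_pow_left₀ (by positivity)
          linarith [Real.add_one_le_exp (s^2)]
      _ = Real.exp ((N:ℝ) * s^2) := by rw [← Real.exp_nat_mul]
      _ ≤ Real.exp 1 := Real.exp_le_exp.2 h
      _ ≤ 4 := by linarith [Real.exp_one_lt_d9.le]
  nlinarith [norm_nonneg ((1 + (s:ℂ) * Complex.I) ^ N)]

private lemma one_le_pow_norm (N : ℕ) (s : ℝ) :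
    1 ≤ ‖(1 + (s:ℂ) * Complex.I) ^ N‖ := by
  have h1 : (1:ℝ) ≤ ‖(1 + (s:ℂ) * Complex.I) ^ N‖ ^ 2 := by
    rw [pow_norm_sq]
    apply one_le_pow₀
    nlinarith [sq_nonneg s]
  nlinarith [norm_nonneg ((1 + (s:ℂ) * Complex.I) ^ N)]

private lemma norm_sq_int {μ : Measure ℝ} (g : Lp ℂ 2 μ) :
    ‖g‖ ^ 2 = ∫ x, ‖g x‖ ^ 2 ∂μ := by
  have h1 : ‖g‖ ^ 2 = RCLike.re (inner (𝕜 := ℂ) g g) := InnerProductSpace.norm_sq_eq_re_inner (𝕜 := ℂ) g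
  rw [h1, L2.inner_def]
  simp_rw [inner_self_eq_norm_sq_to_K]
  simp_rw [← RCLike.ofReal_pow]
  rw [integral_ofReal, RCLike.ofReal_re]

set_option maxHeartbeats 2000000 in
/-- There is no bounded linear operator `T` on `L²((0,1); ℂ)` with
`T(xⁿ) = (n + 1/2) e^{-(n+1/2)} · xⁿ` for every `n`; in particular a monomial operator can
fail to be bounded even though its coefficient sequence tends to `0`. -/
theorem stmt6
    (mono : ℕ → Lp ℂ 2 (volume.restrict (Ioo (0:ℝ) 1)))
    (hmono : ∀ n : ℕ, (mono n : ℝ → ℂ) =ᵐ[volume.restrict (Ioo (0:ℝ) 1)]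
      fun x : ℝ => (x : ℂ) ^ (n : ℕ)) :
    ¬ ∃ T : Lp ℂ 2 (volume.restrict (Ioo (0:ℝ) 1)) →L[ℂ]
        Lp ℂ 2 (volume.restrict (Ioo (0:ℝ) 1)),
      ∀ n : ℕ, T (mono n) =
        ((((n : ℝ) + 1/2) * Real.exp (-((n : ℝ) + 1/2)) : ℝ) : ℂ) • mono n := by
  rintro ⟨T, hT⟩
  classical
  haveI : IsFiniteMeasure (volume.restrict (Ioo (0:ℝ) 1)) := by
    refine ⟨?_⟩
    rw [Measure.restrict_apply_univ]
    simp [Real.volume_Ioo]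
  obtain ⟨k, hk⟩ := exists_nat_ge (48 * ‖T‖ + 100)
  have hTnn : (0:ℝ) ≤ ‖T‖ := norm_nonneg T
  have hk100 : (100:ℝ) ≤ k := by linarith
  have hkpos : (0:ℝ) < k := by linarith
  have hk1 : 0 < k := Nat.cast_pos.mp hkpos
  obtain ⟨M, hM⟩ : ∃ M : ℕ, k^2 = M + 1 :=
    ⟨k^2 - 1, (Nat.succ_pred_eq_of_pos (pow_pos hk1 2)).symm⟩
  set N : ℕ := M + 1 with hNdef
  have hNk : (N:ℝ) = (k:ℝ)^2 := by rw [← hM]; push_cast; ring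
  have hNpos : (0:ℝ) < N := by rw [hNk]; positivity
  have hNne : (N:ℝ) ≠ 0 := ne_of_gt hNpos
  have hkne : (k:ℝ) ≠ 0 := ne_of_gt hkpos
  -- coefficients
  set a : ℕ → ℂ := fun n => ((N.choose n : ℕ) : ℂ) * (Complex.I * k / N)^n with hadef
  set c : ℕ → ℂ := fun n => ((((n : ℝ) + 1/2) * Real.exp (-((n : ℝ) + 1/2)) : ℝ) : ℂ)
    with hcdef
  set f : Lp ℂ 2 (volume.restrict (Ioo (0:ℝ) 1)) :=
    ∑ n ∈ Finset.range (N+1), a n • mono n with hfdef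
  -- coeFn of sums
  have hcoe : ∀ (g : ℕ → Lp ℂ 2 (volume.restrict (Ioo (0:ℝ) 1))) (s : Finset ℕ),
      ((∑ n ∈ s, g n : Lp ℂ 2 (volume.restrict (Ioo (0:ℝ) 1))) : ℝ → ℂ)
        =ᵐ[volume.restrict (Ioo (0:ℝ) 1)] fun x => ∑ n ∈ s, (g n : ℝ → ℂ) x := by
    intro g s
    induction s using Finset.induction_on with
    | empty =>
      rw [Finset.sum_empty]
      filter_upwards [Lp.coeFn_zero ℂ 2 (volume.restrict (Ioo (0:ℝ) 1))] with x hx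
      simpa using hx
    | insert _ _ his ih =>
      rename_i i s
      rw [Finset.sum_insert his]
      filter_upwards [Lp.coeFn_add (g i) (∑ n ∈ s, g n), ih] with x h1 h2
      rw [h1]
      simp only [Pi.add_apply, h2, Finset.sum_insert his]
  have hrep : ∀ b : ℕ → ℂ,
      ((∑ n ∈ Finset.range (N+1), b n • mono n :
          Lp ℂ 2 (volume.restrict (Ioo (0:ℝ) 1))) : ℝ → ℂ)
        =ᵐ[volume.restrict (Ioo (0:ℝ) 1)]
          fun x : ℝ => ∑ n ∈ Finset.range (N+1), b n * (x:ℂ)^n := by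
    intro b
    have h2 : ∀ᵐ x ∂(volume.restrict (Ioo (0:ℝ) 1)), ∀ n ∈ Finset.range (N+1),
        ((b n • mono n : Lp ℂ 2 (volume.restrict (Ioo (0:ℝ) 1))) : ℝ → ℂ) x
          = b n * (x:ℂ)^n := by
      rw [Filter.eventually_all_finset]
      intro n _
      filter_upwards [Lp.coeFn_smul (b n) (mono n), hmono n] with x hx h'
      rw [hx]
      simp [h']
    filter_upwards [hcoe (fun n => b n • mono n) (Finset.range (N+1)), h2] with x h1 h2'
    rw [h1]
    exact Finset.sum_congr rfl fun n hn => h2' n hn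
  -- upper bound for ‖f‖
  have hf_ae : (f : ℝ → ℂ) =ᵐ[volume.restrict (Ioo (0:ℝ) 1)]
      fun x : ℝ => (1 + ((k * x / N : ℝ) : ℂ) * Complex.I)^N := by
    refine (hrep a).trans (Filter.Eventually.of_forall fun x => ?_)
    have hz : ∀ n, a n * (x:ℂ)^n
        = (N.choose n : ℂ) * (((k * x / N : ℝ) : ℂ) * Complex.I)^n := by
      intro n
      rw [hadef, mul_assoc, ← mul_pow]
      congr 2
      push_cast
      ring
    show (∑ n ∈ Finset.range (N+1), a n * (x:ℂ)^n) = _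
    rw [Finset.sum_congr rfl fun n _ => hz n, sumA]
  have hf_bound : ‖f‖ ≤ 2 := by
    have hx01 : ∀ᵐ x ∂(volume.restrict (Ioo (0:ℝ) 1)), x ∈ Ioo (0:ℝ) 1 :=
      ae_restrict_mem measurableSet_Ioo
    have hb : ∀ᵐ x ∂(volume.restrict (Ioo (0:ℝ) 1)), ‖(f : ℝ → ℂ) x‖ ≤ 2 := by
      filter_upwards [hf_ae, hx01] with x h1 h2
      rw [h1]
      apply pow_norm_le
      have heq : (N:ℝ) * (k * x / N)^2 = x^2 := by
        rw [hNk]; field_simp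
      rw [heq]
      nlinarith [h2.1, h2.2]
    have hμuniv : measureUnivNNReal (volume.restrict (Ioo (0:ℝ) 1)) = 1 := by
      simp [measureUnivNNReal, Measure.restrict_apply_univ, Real.volume_Ioo]
    have := Lp.norm_le_of_ae_bound (by norm_num : (0:ℝ) ≤ 2) hb
    rw [hμuniv] at this
    simpa using this
  -- T f
  have hTf : T f = ∑ n ∈ Finset.range (N+1), (a n * c n) • mono n := by
    rw [hfdef, map_sum]
    refine Finset.sum_congr rfl fun n _ => ?_
    rw [_root_.map_smul, hT n, smul_smul]
  -- closed form for T f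
  set s' : ℝ → ℝ := fun x => k * Real.exp (-1) * x / N with hs'def
  set q : ℝ → ℂ := fun x => (Real.exp (-(1/2)) : ℂ) *
      ((N:ℂ) * (((s' x : ℝ):ℂ) * Complex.I) * (1 + ((s' x : ℝ):ℂ) * Complex.I)^M
        + (1 + ((s' x : ℝ):ℂ) * Complex.I)^N / 2) with hqdef
  have hTf_ae : ((T f : Lp ℂ 2 (volume.restrict (Ioo (0:ℝ) 1))) : ℝ → ℂ)
      =ᵐ[volume.restrict (Ioo (0:ℝ) 1)] q := by
    rw [hTf]
    refine (hrep fun n => a n * c n).trans (Filter.Eventually.of_forall fun x => ?_)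
    show (∑ n ∈ Finset.range (N+1), (a n * c n) * (x:ℂ)^n) = q x
    have hterm : ∀ n, (a n * c n) * (x:ℂ)^n
        = (Real.exp (-(1/2)) : ℂ) * ((n:ℂ) * (N.choose n : ℂ) * (((s' x : ℝ):ℂ) * Complex.I)^n
            + (1/2) * ((N.choose n : ℂ) * (((s' x : ℝ):ℂ) * Complex.I)^n)) := by
      intro n
      have hexp : Real.exp (-((n:ℝ) + 1/2)) = Real.exp (-(1/2)) * Real.exp (-1)^n := by
        rw [← Real.exp_nat_mul, ← Real.exp_add]
        congr 1
        push_cast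
        ring
      have hwn : (((s' x : ℝ):ℂ) * Complex.I)^n
          = (Complex.I * k / N)^n * (((Real.exp (-1) : ℝ):ℂ) * (x:ℂ))^n := by
        rw [← mul_pow]
        congr 1
        rw [hs'def]
        push_cast
        ring
      rw [hadef, hcdef, hwn]
      push_cast [hexp]
      ring
    rw [Finset.sum_congr rfl fun n _ => hterm n, ← Finset.mul_sum, hqdef]
    congr 1
    rw [Finset.sum_add_distrib, ← Finset.mul_sum]
    have hr : N + 1 = M + 2 := by rw [hNdef]
    rw [hr]
    rw [sumB M (((s' x : ℝ):ℂ) * Complex.I)]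
    have hr2 : M + 2 = N + 1 := hr.symm
    rw [hr2, sumA N (((s' x : ℝ):ℂ) * Complex.I)]
    push_cast [hNdef]
    ring
  -- pointwise lower bound for q on (1/2, 1)
  have he1 : Real.exp 1 ≤ 3 := by linarith [Real.exp_one_lt_d9.le]
  have he2 : (2:ℝ) ≤ Real.exp 1 := by linarith [Real.add_one_le_exp 1]
  have heh : Real.exp (1/2) ≤ 2 := by
    nlinarith [Real.exp_pos (1/2), Real.exp_add (1/2) (1/2)]
  have hinvh : (1/2 : ℝ) ≤ Real.exp (-(1/2)) := by
    have hp : Real.exp (-(1/2)) * Real.exp (1/2) = 1 := by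
      rw [← Real.exp_add]; norm_num
    nlinarith [Real.exp_pos (-(1/2)), Real.exp_pos (1/2)]
  have hinv1 : (1/3 : ℝ) ≤ Real.exp (-1) := by
    have hp : Real.exp (-1) * Real.exp 1 = 1 := by
      rw [← Real.exp_add]; norm_num
    nlinarith [Real.exp_pos (-1), Real.exp_pos 1]
  have hinv1' : Real.exp (-1) ≤ 1 := by
    have hp : Real.exp (-1) * Real.exp 1 = 1 := by
      rw [← Real.exp_add]; norm_num
    nlinarith [Real.exp_pos (-1)]
  have hqlow : ∀ x ∈ Ioo (1/2 : ℝ) 1, ((k:ℝ)/12 - 1/2 : ℝ) ≤ ‖q x‖ := by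
    intro x hx
    have hxl : (1/2:ℝ) < x := hx.1
    have hxu : x < 1 := hx.2
    have hs'pos : 0 ≤ s' x := by
      rw [hs'def]
      have := Real.exp_pos (-1)
      positivity
    have hsx : s' x = Real.exp (-1) * x / k := by
      rw [hs'def]
      dsimp only
      rw [hNk]
      field_simp
    have hs'bound : (N:ℝ) * (s' x)^2 ≤ 1 := by
      rw [hsx, hNk]
      have h2 : (k:ℝ)^2 * (Real.exp (-1) * x / k)^2 = (Real.exp (-1))^2 * x^2 := by
        field_simp
      rw [h2]
      have hA : (Real.exp (-1))^2 ≤ 1 := by nlinarith [Real.exp_pos (-1)]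
      have hB : x^2 ≤ 1 := by nlinarith
      nlinarith [hA, hB, sq_nonneg (Real.exp (-1)), sq_nonneg x]
    have h1w : 1 ≤ ‖(1 + ((s' x : ℝ):ℂ) * Complex.I)^M‖ := one_le_pow_norm M (s' x)
    have h2w : ‖(1 + ((s' x : ℝ):ℂ) * Complex.I)^N‖ ≤ 2 := pow_norm_le N (s' x) hs'bound
    have hnormq : ‖q x‖ = Real.exp (-(1/2)) *
        ‖(N:ℂ) * (((s' x : ℝ):ℂ) * Complex.I) * (1 + ((s' x : ℝ):ℂ) * Complex.I)^M
          + (1 + ((s' x : ℝ):ℂ) * Complex.I)^N / 2‖ := by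
      rw [hqdef]
      dsimp only
      rw [norm_mul, Complex.norm_real, Real.norm_eq_abs, abs_of_pos (Real.exp_pos _)]
    have hAn : ‖(N:ℂ) * (((s' x : ℝ):ℂ) * Complex.I) * (1 + ((s' x : ℝ):ℂ) * Complex.I)^M‖
        = (N:ℝ) * (s' x) * ‖(1 + ((s' x : ℝ):ℂ) * Complex.I)^M‖ := by
      rw [norm_mul, norm_mul, Complex.norm_natCast, norm_mul, Complex.norm_real,
        Complex.norm_I, mul_one, Real.norm_eq_abs, abs_of_nonneg hs'pos]
    have hBn : ‖(1 + ((s' x : ℝ):ℂ) * Complex.I)^N / 2‖ ≤ 1 := by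
      rw [norm_div]
      have : ‖(2:ℂ)‖ = 2 := by norm_num
      rw [this]
      linarith
    have hAB : ‖(N:ℂ) * (((s' x : ℝ):ℂ) * Complex.I) * (1 + ((s' x : ℝ):ℂ) * Complex.I)^M‖
        ≤ ‖(N:ℂ) * (((s' x : ℝ):ℂ) * Complex.I) * (1 + ((s' x : ℝ):ℂ) * Complex.I)^M
            + (1 + ((s' x : ℝ):ℂ) * Complex.I)^N / 2‖
          + ‖(1 + ((s' x : ℝ):ℂ) * Complex.I)^N / 2‖ := by
      have := norm_add_le
        ((N:ℂ) * (((s' x : ℝ):ℂ) * Complex.I) * (1 + ((s' x : ℝ):ℂ) * Complex.I)^M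
          + (1 + ((s' x : ℝ):ℂ) * Complex.I)^N / 2)
        (-((1 + ((s' x : ℝ):ℂ) * Complex.I)^N / 2))
      simpa using this
    have hNs : (N:ℝ) * s' x = k * Real.exp (-1) * x := by
      rw [hs'def]
      dsimp only
      field_simp
    have hks : (k:ℝ)/6 ≤ (k:ℝ) * Real.exp (-1) * x := by
      have h1 : (k:ℝ)/3 ≤ (k:ℝ) * Real.exp (-1) := by nlinarith [hkpos]
      nlinarith [mul_nonneg
        (by linarith : (0:ℝ) ≤ (k:ℝ) * Real.exp (-1) - (k:ℝ)/3)
        (by linarith : (0:ℝ) ≤ x - 1/2), hkpos]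
    have hMlow : (k:ℝ)/6 ≤ (N:ℝ) * s' x * ‖(1 + ((s' x : ℝ):ℂ) * Complex.I)^M‖ := by
      have h0 : (k:ℝ)/6 ≤ (N:ℝ) * s' x := by rw [hNs]; exact hks
      nlinarith [h1w, h0, hkpos]
    have hsum : (k:ℝ)/6 - 1 ≤ ‖(N:ℂ) * (((s' x : ℝ):ℂ) * Complex.I)
        * (1 + ((s' x : ℝ):ℂ) * Complex.I)^M + (1 + ((s' x : ℝ):ℂ) * Complex.I)^N / 2‖ := by
      rw [hAn] at hAB
      linarith
    rw [hnormq]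
    nlinarith [hinvh, hsum, hk100, Real.exp_pos (-(1/2))]
  -- measure of the small interval
  have hμs : (volume.restrict (Ioo (0:ℝ) 1)) (Ioo (1/2:ℝ) 1) = ENNReal.ofReal (1/2) := by
    rw [Measure.restrict_apply measurableSet_Ioo]
    rw [Set.inter_eq_self_of_subset_left (Set.Ioo_subset_Ioo (by norm_num) le_rfl)]
    rw [Real.volume_Ioo]
    norm_num
  have hμsne : (volume.restrict (Ioo (0:ℝ) 1)) (Ioo (1/2:ℝ) 1) ≠ ⊤ := by
    rw [hμs]; exact ENNReal.ofReal_ne_top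
  -- integrability
  have hInt : Integrable (fun x => ‖((T f : Lp ℂ 2 (volume.restrict (Ioo (0:ℝ) 1))) : ℝ → ℂ) x‖^2)
      (volume.restrict (Ioo (0:ℝ) 1)) := by
    have h0 := (Lp.memLp (T f)).integrable_norm_rpow two_ne_zero ENNReal.ofNat_ne_top
    have h2 : (2:ENNReal).toReal = ((2:ℕ):ℝ) := by simp
    rw [h2] at h0
    refine h0.congr (Filter.Eventually.of_forall fun x => ?_)
    simp [Real.rpow_natCast]
  have hIntq : IntegrableOn (fun x => ‖q x‖^2) (Ioo (1/2:ℝ) 1)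
      (volume.restrict (Ioo (0:ℝ) 1)) := by
    refine (hInt.integrableOn (s := Ioo (1/2:ℝ) 1)).congr ?_
    exact ae_restrict_of_ae (hTf_ae.mono fun x hx => by simp only [hx])
  have hblow : (0:ℝ) ≤ (k:ℝ)/12 - 1/2 := by linarith
  have key : ((k:ℝ)/12 - 1/2)^2 * (1/2) ≤ ‖T f‖^2 := by
    rw [norm_sq_int (T f)]
    have step1 : ((k:ℝ)/12 - 1/2)^2 * (1/2)
        ≤ ∫ x in Ioo (1/2:ℝ) 1, ‖q x‖^2 ∂(volume.restrict (Ioo (0:ℝ) 1)) := by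
      have h := setIntegral_ge_of_const_le (μ := volume.restrict (Ioo (0:ℝ) 1))
        measurableSet_Ioo hμsne
        (fun x hx => pow_le_pow_left₀ hblow (hqlow x hx) 2) hIntq
      calc ((k:ℝ)/12 - 1/2)^2 * (1/2)
          = ((k:ℝ)/12 - 1/2)^2 * ((volume.restrict (Ioo (0:ℝ) 1)) (Ioo (1/2:ℝ) 1)).toReal := by
            rw [hμs, ENNReal.toReal_ofReal (by norm_num : (0:ℝ) ≤ 1/2)]
        _ ≤ _ := by rw [measureReal_def, smul_eq_mul, mul_comm] at h; exact h
    have step2 : ∫ x in Ioo (1/2:ℝ) 1, ‖q x‖^2 ∂(volume.restrict (Ioo (0:ℝ) 1))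
        = ∫ x in Ioo (1/2:ℝ) 1,
            ‖((T f : Lp ℂ 2 (volume.restrict (Ioo (0:ℝ) 1))) : ℝ → ℂ) x‖^2
              ∂(volume.restrict (Ioo (0:ℝ) 1)) := by
      refine setIntegral_congr_ae measurableSet_Ioo ?_
      exact hTf_ae.mono fun x hx _ => by simp only [hx]
    have step3 : ∫ x in Ioo (1/2:ℝ) 1,
          ‖((T f : Lp ℂ 2 (volume.restrict (Ioo (0:ℝ) 1))) : ℝ → ℂ) x‖^2
            ∂(volume.restrict (Ioo (0:ℝ) 1))
        ≤ ∫ x, ‖((T f : Lp ℂ 2 (volume.restrict (Ioo (0:ℝ) 1))) : ℝ → ℂ) x‖^2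
            ∂(volume.restrict (Ioo (0:ℝ) 1)) :=
      setIntegral_le_integral hInt (Filter.Eventually.of_forall fun x => by positivity)
    linarith
  have hop : ‖T f‖ ≤ 2 * ‖T‖ := by
    calc ‖T f‖ ≤ ‖T‖ * ‖f‖ := T.le_opNorm f
      _ ≤ ‖T‖ * 2 := by nlinarith [hf_bound, hTnn]
      _ = 2 * ‖T‖ := by ring
  have hfin : ((k:ℝ)/12 - 1/2)^2 * (1/2) ≤ (2*‖T‖)^2 := by
    nlinarith [norm_nonneg (T f), key, hop]
  nlinarith [hfin, hk, hTnn]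
end

section
/- Let f : (0,1) → ℝ be defined by f(t) = 1/(√t · log t) for t ∈ (0, 1/2) and f(t) = 0 for t ∈ [1/2, 1). Then f belongs to L²((0,1); ℝ), but for every x ∈ (0,1) the function t ↦ f(t²) is not Lebesgue integrable on (0,x). Consequently, there is no bounded linear operator T₂ on L²((0,1); ℂ) given by (T₂ f)(x) = ∫₀ˣ f(t²) dt, i.e. the monomial operator T₂ with T₂(xⁿ) = x^{2n+1}/(2n+1) is unbounded. -/
open MeasureTheory Set

/-- Pulling back an a.e. equality on `(0,1)` through `t ↦ t²`. -/
lemma sq_pullback_ae {α : Type*} {g h : ℝ → α}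
    (hgh : ∀ᵐ t ∂(volume.restrict (Ioo (0:ℝ) 1)), g t = h t) :
    ∀ᵐ t ∂(volume.restrict (Ioo (0:ℝ) 1)), g (t ^ 2) = h (t ^ 2) := by
  have hN : volume ({t | ¬ g t = h t} ∩ Ioo (0:ℝ) 1) = 0 := by
    rw [MeasureTheory.ae_iff, Measure.restrict_apply' measurableSet_Ioo] at hgh
    exact hgh
  set N' := toMeasurable volume ({t | ¬ g t = h t} ∩ Ioo (0:ℝ) 1) with hN'def
  have hN'0 : volume N' = 0 := by rw [hN'def, measure_toMeasurable]; exact hN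
  have hN'm : MeasurableSet N' := measurableSet_toMeasurable _ _
  set A := Ioo (0:ℝ) 1 ∩ (fun t : ℝ => t ^ 2) ⁻¹' N' with hAdef
  have hAm : MeasurableSet A :=
    measurableSet_Ioo.inter (hN'm.preimage (by measurability))
  have hApos : ∀ x ∈ A, (0:ℝ) < x := fun x hx => hx.1.1
  have himg : (fun t : ℝ => t ^ 2) '' A ⊆ N' := by
    rintro y ⟨t, ht, rfl⟩; exact ht.2
  have hderiv : ∀ x ∈ A, HasFDerivWithinAt (fun t : ℝ => t ^ 2)
      ((1 : ℝ →L[ℝ] ℝ).smulRight (2 * x)) A x := by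
    intro x _
    have := (hasDerivAt_pow 2 x).hasFDerivAt
    simpa [ContinuousLinearMap.smulRight_one_eq_toSpanSingleton] using this.hasFDerivWithinAt
  have hinj : InjOn (fun t : ℝ => t ^ 2) A := by
    have : InjOn (fun t : ℝ => t ^ 2) {a : ℝ | 0 ≤ a} :=
      (pow_left_strictMonoOn₀ two_ne_zero).injOn
    exact this.mono fun x hx => (hApos x hx).le
  have key := lintegral_image_eq_lintegral_abs_det_fderiv_mul volume hAm hderiv hinj
    (fun _ => (1 : ENNReal))
  have hL : ∫⁻ x in (fun t : ℝ => t ^ 2) '' A, (1 : ENNReal) = 0 := by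
    rw [setLIntegral_one]
    exact measure_mono_null himg hN'0
  rw [hL] at key
  have key' : ∫⁻ x in A, ENNReal.ofReal |2 * x| = 0 := by
    have h := key.symm
    simpa [ContinuousLinearMap.det_toSpanSingleton] using h
  have hA0 : volume A = 0 := by
    have hae : ∀ᵐ x ∂(volume.restrict A), ENNReal.ofReal |2 * x| = 0 :=
      (lintegral_eq_zero_iff ((measurable_id.const_mul (2:ℝ)).abs.ennreal_ofReal)).mp key'
    rw [MeasureTheory.ae_iff, Measure.restrict_apply' hAm] at hae
    refine measure_mono_null (fun x hx => ?_) hae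
    refine ⟨?_, hx⟩
    have : (0:ℝ) < |2 * x| := by
      have := hApos x hx; rw [abs_of_pos (by linarith)]; linarith
    simp only [mem_setOf_eq]
    exact fun hc => (ENNReal.ofReal_pos.2 this).ne' hc
  rw [MeasureTheory.ae_iff, Measure.restrict_apply' measurableSet_Ioo]
  refine measure_mono_null (fun t ht => ?_) hA0
  refine ⟨ht.2, ?_⟩
  have ht1 : t ^ 2 ∈ Ioo (0:ℝ) 1 := by
    constructor
    · exact pow_pos ht.2.1 2
    · nlinarith [ht.2.1, ht.2.2]
  exact subset_toMeasurable _ _ ⟨ht.1, ht1⟩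

/-- The composed function `t ↦ f (t²)` is not integrable near `0`. -/
lemma not_integrable_comp_sq (f : ℝ → ℝ)
    (hf₁ : ∀ t ∈ Ioo (0:ℝ) (1/2), f t = 1 / (Real.sqrt t * Real.log t)) :
    ∀ x ∈ Ioo (0:ℝ) 1, ¬ IntegrableOn (fun t : ℝ => f (t ^ 2)) (Ioo (0:ℝ) x) volume := by
  intro x hx h
  set c : ℝ := min x (7/10) with hcdef
  have hc0 : 0 < c := lt_min hx.1 (by norm_num)
  have hcx : c ≤ x := min_le_left _ _
  have hc7 : c ≤ 7/10 := min_le_right _ _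
  have hc1 : c < 1 := lt_of_le_of_lt hc7 (by norm_num)
  set ψ : ℝ → ℝ := fun t => 1 / (t * (2 * Real.log t)) with hψdef
  have hψ : IntegrableOn ψ (Ioo (0:ℝ) c) volume := by
    refine (h.mono_set (Ioo_subset_Ioo_right hcx)).congr_fun ?_ measurableSet_Ioo
    intro t ht
    have ht2 : t ^ 2 ∈ Ioo (0:ℝ) (1/2) := by
      constructor
      · exact pow_pos ht.1 2
      · nlinarith [ht.2, hc7, ht.1]
    show f (t ^ 2) = 1 / (t * (2 * Real.log t))
    rw [hf₁ _ ht2, Real.sqrt_sq ht.1.le, Real.log_pow]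
    norm_num
  set φ : ℝ → ℝ := fun t => -ψ t with hφdef
  have hφ : IntegrableOn φ (Ioo (0:ℝ) c) volume := hψ.neg
  set M : ℝ := ∫ t in Ioo (0:ℝ) c, φ t with hMdef
  set G : ℝ → ℝ := fun t => -((1/2) * Real.log (-Real.log t)) with hGdef
  set K : ℝ := 2 * (M - G c) with hKdef
  set E : ℝ := Real.exp (-(Real.exp K + 1)) with hEdef
  set ε : ℝ := min (c/2) E with hεdef
  have hε0 : 0 < ε := lt_min (by linarith) (Real.exp_pos _)
  have hεc : ε < c := lt_of_le_of_lt (min_le_left _ _) (by linarith)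
  have hφnonneg : ∀ y ∈ Ioo (0:ℝ) c, 0 < φ y := by
    intro y hy
    have hlog : Real.log y < 0 := Real.log_neg hy.1 (hy.2.trans hc1)
    have : y * (2 * Real.log y) < 0 := mul_neg_of_pos_of_neg hy.1 (by linarith)
    have := one_div_neg.2 this
    simp only [hφdef, hψdef]
    linarith
  -- FTC on [ε, c]
  have hderiv : ∀ y ∈ uIcc ε c, HasDerivAt G (φ y) y := by
    intro y hy
    rw [uIcc_of_le hεc.le] at hy
    have hy0 : 0 < y := lt_of_lt_of_le hε0 hy.1
    have hy1 : y < 1 := lt_of_le_of_lt hy.2 hc1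
    have hlog : Real.log y < 0 := Real.log_neg hy0 hy1
    have h1 : HasDerivAt Real.log y⁻¹ y := Real.hasDerivAt_log (ne_of_gt hy0)
    have h2 : HasDerivAt (fun t => -Real.log t) (-y⁻¹) y := h1.neg
    have h3 : HasDerivAt (fun t => Real.log (-Real.log t)) (-y⁻¹ / -Real.log y) y :=
      h2.log (by simpa using ne_of_lt hlog)
    have h4 := (h3.const_mul ((1:ℝ)/2)).neg
    have heq : -((1:ℝ)/2 * (-y⁻¹ / -Real.log y)) = φ y := by
      simp only [hφdef, hψdef]
      field_simp
    rw [heq] at h4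
    exact h4
  have hInt : IntervalIntegrable φ volume ε c := by
    apply ContinuousOn.intervalIntegrable
    have hsub : uIcc ε c ⊆ {(0:ℝ)}ᶜ := by
      rw [uIcc_of_le hεc.le]
      intro y hy
      exact (ne_of_gt (lt_of_lt_of_le hε0 hy.1))
    have hden : ∀ y ∈ uIcc ε c, y * (2 * Real.log y) ≠ 0 := by
      intro y hy
      rw [uIcc_of_le hεc.le] at hy
      have hy0 : 0 < y := lt_of_lt_of_le hε0 hy.1
      have hlog : Real.log y < 0 := Real.log_neg hy0 (lt_of_le_of_lt hy.2 hc1)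
      exact ne_of_lt (mul_neg_of_pos_of_neg hy0 (by linarith))
    exact (ContinuousOn.div continuousOn_const
      (continuousOn_id.mul (continuousOn_const.mul (Real.continuousOn_log.mono hsub)))
      hden).neg
  have hFTC : ∫ y in ε..c, φ y = G c - G ε :=
    intervalIntegral.integral_eq_sub_of_hasDerivAt hderiv hInt
  have hIoo : ∫ y in ε..c, φ y = ∫ y in Ioo ε c, φ y := by
    rw [intervalIntegral.integral_of_le hεc.le, MeasureTheory.integral_Ioc_eq_integral_Ioo]
  have hmono : ∫ y in Ioo ε c, φ y ≤ M := by
    refine setIntegral_mono_set hφ ?_ (HasSubset.Subset.eventuallyLE (Ioo_subset_Ioo_left hε0.le))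
    refine (ae_restrict_iff' measurableSet_Ioo).2 (Filter.Eventually.of_forall ?_)
    exact fun y hy => (hφnonneg y hy).le
  -- lower bound on G c - G ε
  have hεE : ε ≤ E := min_le_right _ _
  have hlogε : Real.log ε ≤ -(Real.exp K + 1) := by
    have := Real.log_le_log hε0 hεE
    rwa [hEdef, Real.log_exp] at this
  have hlogK : K < Real.log (-Real.log ε) := by
    have h1 : Real.exp K < -Real.log ε := by
      have := Real.exp_pos K; linarith
    have := Real.log_lt_log (Real.exp_pos K) h1
    rwa [Real.log_exp] at this
  have hGε : G c - G ε > M := by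
    have : G ε = -((1/2) * Real.log (-Real.log ε)) := rfl
    rw [this]
    have : (1:ℝ)/2 * K < (1/2) * Real.log (-Real.log ε) := by linarith
    rw [hKdef] at this
    linarith
  rw [hIoo] at hFTC
  linarith

set_option maxHeartbeats 1000000 in
/-- Let `f(t) = 1/(√t log t)` on `(0,1/2)` and `f(t) = 0` on `[1/2,1)`. Then
`f ∈ L²((0,1); ℝ)`, but for every `x ∈ (0,1)` the function `t ↦ f(t²)` is not Lebesgue
integrable on `(0,x)`. Consequently there is no bounded linear operator `T₂` on
`L²((0,1); ℂ)` given by `(T₂g)(x) = ∫₀ˣ g(t²) dt`. -/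
theorem stmt10 (f : ℝ → ℝ)
    (hf₁ : ∀ t ∈ Ioo (0:ℝ) (1/2), f t = 1 / (Real.sqrt t * Real.log t))
    (hf₂ : ∀ t ∈ Ico (1/2 : ℝ) 1, f t = 0) :
    MemLp f 2 (volume.restrict (Ioo (0:ℝ) 1)) ∧
    (∀ x ∈ Ioo (0:ℝ) 1, ¬ IntegrableOn (fun t : ℝ => f (t ^ 2)) (Ioo (0:ℝ) x) volume) ∧
    ¬ ∃ T₂ : Lp ℂ 2 (volume.restrict (Ioo (0:ℝ) 1)) →L[ℂ]
        Lp ℂ 2 (volume.restrict (Ioo (0:ℝ) 1)),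
      ∀ g : Lp ℂ 2 (volume.restrict (Ioo (0:ℝ) 1)),
        ∀ᵐ x ∂(volume.restrict (Ioo (0:ℝ) 1)),
          (T₂ g : ℝ → ℂ) x = ∫ t in Ioo (0:ℝ) x, (g : ℝ → ℂ) (t ^ 2) := by
  haveI hfin : IsFiniteMeasure (volume.restrict (Ioo (0:ℝ) 1)) := ⟨by
    rw [Measure.restrict_apply_univ, Real.volume_Ioo]; exact ENNReal.ofReal_lt_top⟩
  set μ := volume.restrict (Ioo (0:ℝ) 1) with hμ
  have hpart2 := not_integrable_comp_sq f hf₁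
  -- Part 1 : MemLp
  set f₀ : ℝ → ℝ := fun t => if t < 1/2 then 1 / (Real.sqrt t * Real.log t) else 0 with hf₀
  have hmeas : Measurable f₀ := Measurable.ite measurableSet_Iio
    (measurable_const.div ((Real.continuous_sqrt.measurable).mul Real.measurable_log))
    measurable_const
  have hae : f₀ =ᵐ[μ] f := by
    rw [hμ]
    refine (ae_restrict_iff' measurableSet_Ioo).2 (Filter.Eventually.of_forall fun t ht => ?_)
    by_cases h2 : t < 1/2
    · simp only [hf₀, if_pos h2]; exact (hf₁ t ⟨ht.1, h2⟩).symm
    · simp only [hf₀, if_neg h2]; exact (hf₂ t ⟨not_lt.1 h2, ht.2⟩).symm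
  have base : IntegrableOn (fun t => 1 / (t * Real.log t ^ 2)) (Ioc (0:ℝ) (1/2)) volume := by
    have hcont : ContinuousOn (fun t => -(Real.log t)⁻¹) (Icc (0:ℝ) (1/2)) := by
      intro t ht
      rcases eq_or_ne t 0 with rfl | hne
      · have h1 : Filter.Tendsto (fun t : ℝ => -Real.log t) (nhdsWithin 0 (Ioi 0)) Filter.atTop := by
          exact Filter.tendsto_neg_atTop_iff.mpr Real.tendsto_log_nhdsGT_zero
        have h2 : Filter.Tendsto (fun t : ℝ => (-Real.log t)⁻¹) (nhdsWithin 0 (Ioi 0)) (nhds 0) :=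
          h1.inv_tendsto_atTop
        have h3 : Filter.Tendsto (fun t : ℝ => -(Real.log t)⁻¹) (nhdsWithin 0 (Ioi 0)) (nhds 0) := by
          simpa [inv_neg] using h2
        have h4 : ContinuousWithinAt (fun t : ℝ => -(Real.log t)⁻¹) (Ioi 0) 0 := by
          unfold ContinuousWithinAt
          simpa [Real.log_zero] using h3
        exact (continuousWithinAt_Ioi_iff_Ici.mp h4).mono Icc_subset_Ici_self
      · have ht0 : 0 < t := lt_of_le_of_ne ht.1 (Ne.symm hne)
        have hlt1 : t < 1 := lt_of_le_of_lt ht.2 (by norm_num)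
        have hlogne : Real.log t ≠ 0 := ne_of_lt (Real.log_neg ht0 hlt1)
        exact (((Real.continuousAt_log hne).inv₀ hlogne).neg).continuousWithinAt
    have hderiv : ∀ t ∈ Ioo (0:ℝ) (1/2),
        HasDerivAt (fun t => -(Real.log t)⁻¹) (1 / (t * Real.log t ^ 2)) t := by
      intro t ht
      have hlogne : Real.log t ≠ 0 := ne_of_lt (Real.log_neg ht.1 (by linarith [ht.2]))
      have h1 := Real.hasDerivAt_log (ne_of_gt ht.1)
      have h2 := h1.inv hlogne
      have h3 := h2.neg
      have h4 : HasDerivAt (fun t => -(Real.log t)⁻¹) (-(-t⁻¹ / Real.log t ^ 2)) t := h3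
      convert h4 using 1
      field_simp
    have hpos : ∀ t ∈ Ioo (0:ℝ) (1/2), 0 ≤ 1 / (t * Real.log t ^ 2) := by
      intro t ht
      have hlogne : Real.log t ≠ 0 := ne_of_lt (Real.log_neg ht.1 (by linarith [ht.2]))
      exact le_of_lt (div_pos one_pos (mul_pos ht.1 (pow_two_pos_of_ne_zero hlogne)))
    exact intervalIntegral.integrableOn_deriv_of_nonneg hcont hderiv hpos
  have hsq : IntegrableOn (fun t => f₀ t ^ 2) (Ioo (0:ℝ) 1) volume := by
    have h12 : IntegrableOn (fun t => f₀ t ^ 2) (Ioo (0:ℝ) (1/2)) volume := by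
      refine (base.mono_set Ioo_subset_Ioc_self).congr_fun ?_ measurableSet_Ioo
      intro t ht
      simp only [hf₀, if_pos ht.2]
      rw [div_pow, one_pow, mul_pow, Real.sq_sqrt ht.1.le]
    have h21 : IntegrableOn (fun t => f₀ t ^ 2) (Ico (1/2:ℝ) 1) volume := by
      refine (integrableOn_zero).congr_fun ?_ measurableSet_Ico
      intro t ht
      simp only [hf₀]
      rw [if_neg (not_lt.2 ht.1)]
      norm_num
    refine (h12.union h21).mono_set fun t ht => ?_
    by_cases h : t < 1/2
    · exact Or.inl ⟨ht.1, h⟩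
    · exact Or.inr ⟨not_lt.1 h, ht.2⟩
  have part1 : MemLp f 2 μ :=
    MemLp.ae_eq hae ((memLp_two_iff_integrable_sq hmeas.aestronglyMeasurable).2 hsq)
  refine ⟨part1, hpart2, ?_⟩
  -- Part 3
  rintro ⟨T₂, hT⟩
  set F : ℝ → ℂ := fun t => (f t : ℂ) with hF
  have hFmem : MemLp F 2 μ := part1.ofReal
  set g₁ : Lp ℂ 2 μ := hFmem.toLp F with hg₁
  have hg₂mem : MemLp (fun _ : ℝ => (1:ℂ)) 2 μ := memLp_const 1
  set g₂ : Lp ℂ 2 μ := hg₂mem.toLp _ with hg₂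
  have hc₁ : (g₁ : ℝ → ℂ) =ᵐ[μ] F := hFmem.coeFn_toLp
  have hc₂ : (g₂ : ℝ → ℂ) =ᵐ[μ] fun _ => (1:ℂ) := hg₂mem.coeFn_toLp
  have hc₃ : ((g₁ + g₂ : Lp ℂ 2 μ) : ℝ → ℂ) =ᵐ[μ] fun t => F t + 1 := by
    refine (Lp.coeFn_add g₁ g₂).trans ?_
    filter_upwards [hc₁, hc₂] with t h1 h2
    simp [h1, h2]
  have hp₁ := sq_pullback_ae hc₁
  have hp₂ := sq_pullback_ae hc₂
  have hp₃ := sq_pullback_ae hc₃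
  have hnint : ∀ x ∈ Ioo (0:ℝ) 1,
      ¬ Integrable (fun t : ℝ => F (t ^ 2)) (volume.restrict (Ioo (0:ℝ) x)) := by
    intro x hx hint
    refine hpart2 x hx ?_
    have := hint.re
    simpa [hF, IntegrableOn] using this
  have hfinx : ∀ x : ℝ, IsFiniteMeasure (volume.restrict (Ioo (0:ℝ) x)) := fun x => ⟨by
    rw [Measure.restrict_apply_univ, Real.volume_Ioo]; exact ENNReal.ofReal_lt_top⟩
  have hnint' : ∀ x ∈ Ioo (0:ℝ) 1,
      ¬ Integrable (fun t : ℝ => F (t ^ 2) + 1) (volume.restrict (Ioo (0:ℝ) x)) := by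
    intro x hx hint
    haveI := hfinx x
    have h1 : Integrable (fun _ : ℝ => (1:ℂ)) (volume.restrict (Ioo (0:ℝ) x)) :=
      integrable_const 1
    refine hnint x hx ?_
    have h2 : (fun t : ℝ => F (t ^ 2)) = (fun t => F (t ^ 2) + 1) - fun _ => (1:ℂ) := by
      funext t; simp
    rw [h2]; exact hint.sub h1
  have e₁ : ∀ᵐ x ∂μ, (T₂ g₁ : ℝ → ℂ) x = 0 := by
    filter_upwards [hT g₁, ae_restrict_mem measurableSet_Ioo] with x hx hmem
    rw [hx]
    have hres := ae_restrict_of_ae_restrict_of_subset (Ioo_subset_Ioo_right hmem.2.le) hp₁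
    rw [integral_congr_ae hres]
    exact integral_undef (hnint x hmem)
  have e₂ : ∀ᵐ x ∂μ, (T₂ g₂ : ℝ → ℂ) x = (x:ℂ) := by
    filter_upwards [hT g₂, ae_restrict_mem measurableSet_Ioo] with x hx hmem
    rw [hx]
    have hres := ae_restrict_of_ae_restrict_of_subset (Ioo_subset_Ioo_right hmem.2.le) hp₂
    rw [integral_congr_ae hres, setIntegral_const]
    rw [measureReal_def, Real.volume_Ioo, sub_zero, ENNReal.toReal_ofReal hmem.1.le]
    simp [Complex.real_smul]
  have e₃ : ∀ᵐ x ∂μ, (T₂ (g₁ + g₂) : ℝ → ℂ) x = 0 := by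
    filter_upwards [hT (g₁ + g₂), ae_restrict_mem measurableSet_Ioo] with x hx hmem
    rw [hx]
    have hres := ae_restrict_of_ae_restrict_of_subset (Ioo_subset_Ioo_right hmem.2.le) hp₃
    rw [integral_congr_ae hres]
    exact integral_undef (hnint' x hmem)
  have e₄ : ∀ᵐ x ∂μ, (T₂ (g₁ + g₂) : ℝ → ℂ) x = (T₂ g₁ : ℝ → ℂ) x + (T₂ g₂ : ℝ → ℂ) x := by
    have h := Lp.coeFn_add (T₂ g₁) (T₂ g₂)
    rw [← map_add] at h
    filter_upwards [h] with x hx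
    simpa using hx
  have hfalse : ∀ᵐ x ∂μ, False := by
    filter_upwards [e₁, e₂, e₃, e₄, ae_restrict_mem measurableSet_Ioo]
      with x h1 h2 h3 h4 hmem
    rw [h3, h1, h2] at h4
    have : (x:ℂ) = 0 := by simpa using h4.symm
    rw [Complex.ofReal_eq_zero] at this
    exact absurd this (ne_of_gt hmem.1)
  have hz : μ Set.univ = 0 := by
    rw [MeasureTheory.ae_iff] at hfalse
    simpa using hfalse
  rw [hμ, Measure.restrict_apply_univ, Real.volume_Ioo] at hz
  norm_num at hz
end
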